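/- arXiv:1606.03161 — 6 statements merged into one kernel-verified Lean document; each statement's English description precedes it below -/
import Mathlib

section
/- For the evolving set process associated with a transition matrix K on a finite state space Ω with stationary distribution π, for every t ∈ ℕ, every S ⊆ Ω with π(S) > 0, and every y ∈ Ω: K^t(S,y) = (π(y)/π(S)) · P[y ∈ S_t | S_0 = S], where K^t(S,y) := (1/π(S)) Σ_{x∈S} π(x) K^t(x,y). -/
open MeasureTheory ProbabilityTheory Finset

/-- Transition probabilities of the evolving set process: if `{S_t}` is the evolving
set process of a transition matrix `K` on a finite state space `Ω` with stationary
distribution `π`, started from `S₀`, then for every `t` and `y`,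
`K^t(S₀, y) = (π(y)/π(S₀)) · P[y ∈ S_t]`, where
`K^t(S₀,y) = (1/π(S₀)) Σ_{x∈S₀} π(x) K^t(x,y)`. -/
theorem evolving_set_transition_prob
    {E Ω : Type*} [MeasurableSpace E] [Fintype Ω] [DecidableEq Ω]
    (P : Measure E) [IsProbabilityMeasure P]
    (K : Ω → Ω → ℝ) (π : Ω → ℝ)
    (hKnonneg : ∀ x y, 0 ≤ K x y) (hKrow : ∀ x, ∑ y, K x y = 1)
    (hπnonneg : ∀ x, 0 ≤ π x) (hπsum : ∑ x, π x = 1)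
    (hstat : ∀ y, ∑ x, π x * K x y = π y)
    -- the i.i.d. uniform-[0,1] driving variables
    (U : ℕ → E → ℝ) (hUmeas : ∀ t, Measurable (U t))
    (hUunif : ∀ t, P.map (U t) = (volume : Measure ℝ).restrict (Set.Icc 0 1))
    (hUindep : iIndepFun U P)
    -- the evolving set process
    (S : ℕ → E → Finset Ω) (S₀ : Finset Ω)
    (hS0 : ∀ ω, S 0 ω = S₀)
    (hSrec : ∀ t ω, S (t+1) ω
      = univ.filter (fun y => U (t+1) ω * π y ≤ ∑ x ∈ S t ω, π x * K x y))
    -- the iterated transition matrix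
    (Kpow : ℕ → Ω → Ω → ℝ)
    (hKpow0 : ∀ x y, Kpow 0 x y = if x = y then 1 else 0)
    (hKpowS : ∀ t x y, Kpow (t+1) x y = ∑ z, K x z * Kpow t z y)
    (hπS0 : 0 < ∑ x ∈ S₀, π x) :
    ∀ (t : ℕ) (y : Ω),
      (∑ x ∈ S₀, π x * Kpow t x y) / (∑ x ∈ S₀, π x)
        = π y / (∑ x ∈ S₀, π x) * (P {ω | y ∈ S t ω}).toReal := by
  -- nonnegativity of iterated kernel
  have hKpowNN : ∀ t x y, 0 ≤ Kpow t x y := by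
    intro t
    induction t with
    | zero => intro x y; rw [hKpow0]; split <;> norm_num
    | succ t ih =>
        intro x y; rw [hKpowS]
        exact Finset.sum_nonneg fun z _ => mul_nonneg (hKnonneg x z) (ih z y)
  -- stationarity for iterated kernel
  have hstatpow : ∀ t y, ∑ x, π x * Kpow t x y = π y := by
    intro t
    induction t with
    | zero => intro y; simp [hKpow0, mul_ite, Finset.sum_ite_eq]
    | succ t ih =>
        intro y
        calc ∑ x, π x * Kpow (t+1) x y
            = ∑ x, ∑ z, π x * K x z * Kpow t z y := by
              simp [hKpowS, Finset.mul_sum, mul_assoc]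
          _ = ∑ z, (∑ x, π x * K x z) * Kpow t z y := by
              rw [Finset.sum_comm]
              exact Finset.sum_congr rfl fun z _ => by rw [Finset.sum_mul]
          _ = ∑ z, π z * Kpow t z y := by
              exact Finset.sum_congr rfl fun z _ => by rw [hstat]
          _ = π y := ih y
  -- alternative recursion for the iterated kernel
  have hKpowS' : ∀ t x y, Kpow (t+1) x y = ∑ z, Kpow t x z * K z y := by
    intro t
    induction t with
    | zero =>
        intro x y
        rw [hKpowS]
        simp [hKpow0, mul_ite, ite_mul, Finset.sum_ite_eq, Finset.sum_ite_eq']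
    | succ t ih =>
        intro x y
        calc Kpow (t+2) x y = ∑ z, K x z * Kpow (t+1) z y := hKpowS _ x y
          _ = ∑ z, ∑ w, K x z * (Kpow t z w * K w y) := by
              simp [ih, Finset.mul_sum]
          _ = ∑ w, (∑ z, K x z * Kpow t z w) * K w y := by
              rw [Finset.sum_comm]
              exact Finset.sum_congr rfl fun w _ => by
                rw [Finset.sum_mul]
                exact Finset.sum_congr rfl fun z _ => by ring
          _ = ∑ w, Kpow (t+1) x w * K w y := by
              exact Finset.sum_congr rfl fun w _ => by rw [hKpowS]
  -- bounds on Q(A,y)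
  have hQnn : ∀ (A : Finset Ω) (y : Ω), 0 ≤ ∑ z ∈ A, π z * K z y :=
    fun A y => Finset.sum_nonneg fun z _ => mul_nonneg (hπnonneg z) (hKnonneg z y)
  have hQle : ∀ (A : Finset Ω) (y : Ω), ∑ z ∈ A, π z * K z y ≤ π y := by
    intro A y
    calc ∑ z ∈ A, π z * K z y ≤ ∑ z, π z * K z y :=
          Finset.sum_le_sum_of_subset_of_nonneg (Finset.subset_univ A)
            (fun z _ _ => mul_nonneg (hπnonneg z) (hKnonneg z y))
      _ = π y := hstat y
  -- the filtration
  set m : ℕ → MeasurableSpace E :=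
    fun t => ⨆ i ∈ Set.Iic t, MeasurableSpace.comap (U i) inferInstance with hm
  have hm_le : ∀ t, m t ≤ ‹MeasurableSpace E› := by
    intro t
    exact iSup₂_le fun i _ => (hUmeas i).comap_le
  have hm_mono : ∀ t, m t ≤ m (t+1) := by
    intro t
    exact iSup₂_le fun i hi =>
      le_iSup₂ (f := fun i (_ : i ∈ Set.Iic (t+1)) => MeasurableSpace.comap (U i) inferInstance)
        i (le_trans hi (Nat.le_succ t))
  have hcomap_le : ∀ t, MeasurableSpace.comap (U (t+1)) inferInstance ≤ m (t+1) := by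
    intro t
    exact le_iSup₂ (f := fun i (_ : i ∈ Set.Iic (t+1)) => MeasurableSpace.comap (U i) inferInstance)
      (t+1) (le_refl (t+1))
  -- measurability of the filter set in ℝ
  have hfiltmeas : ∀ (c : Ω → ℝ) (A : Finset Ω),
      MeasurableSet {u : ℝ | univ.filter (fun y => u * π y ≤ c y) = A} := by
    intro c A
    have heq : {u : ℝ | univ.filter (fun y => u * π y ≤ c y) = A}
        = ⋂ y : Ω, {u : ℝ | u * π y ≤ c y ↔ y ∈ A} := by
      ext u
      simp only [Set.mem_setOf_eq, Set.mem_iInter, Finset.ext_iff, Finset.mem_filter,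
        Finset.mem_univ, true_and]
    rw [heq]
    refine MeasurableSet.iInter fun y => ?_
    by_cases hy : y ∈ A
    · have : {u : ℝ | u * π y ≤ c y ↔ y ∈ A} = (fun u : ℝ => u * π y) ⁻¹' Set.Iic (c y) := by
        ext u; simp [hy]
      rw [this]
      exact (measurable_id.mul_const _) measurableSet_Iic
    · have : {u : ℝ | u * π y ≤ c y ↔ y ∈ A} = ((fun u : ℝ => u * π y) ⁻¹' Set.Iic (c y))ᶜ := by
        ext u; simp [hy]
      rw [this]
      exact ((measurable_id.mul_const _) measurableSet_Iic).compl
  -- measurability of events {S t = A}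
  have hSmeas : ∀ t (A : Finset Ω), MeasurableSet[m t] {ω | S t ω = A} := by
    intro t
    induction t with
    | zero =>
        intro A
        by_cases h : S₀ = A
        · have : {ω | S 0 ω = A} = Set.univ := by ext ω; simp [hS0, h]
          rw [this]; exact @MeasurableSet.univ E (m 0)
        · have : {ω | S 0 ω = A} = ∅ := by ext ω; simp [hS0, h]
          rw [this]; exact @MeasurableSet.empty E (m 0)
    | succ t ih =>
        intro A
        have hdecomp : {ω | S (t+1) ω = A}
            = ⋃ B ∈ (Finset.univ : Finset (Finset Ω)), ({ω | S t ω = B}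
              ∩ (U (t+1)) ⁻¹' {u : ℝ | univ.filter (fun y => u * π y ≤ ∑ x ∈ B, π x * K x y) = A}) := by
          ext ω
          simp only [Set.mem_setOf_eq, Set.mem_iUnion, Finset.mem_univ, Set.mem_inter_iff,
            Set.mem_preimage, exists_true_left, hSrec]
          constructor
          · intro h; exact ⟨S t ω, rfl, h⟩
          · rintro ⟨B, rfl, h⟩; exact h
        rw [hdecomp]
        refine MeasurableSet.biUnion (Finset.univ : Finset (Finset Ω)).countable_toSet
          fun B _ => MeasurableSet.inter (hm_mono t _ (ih B)) ?_
        exact hcomap_le t _ ⟨_, hfiltmeas _ A, rfl⟩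
  -- independence of the past and the next uniform
  have hindep : ∀ t, Indep (m t) (MeasurableSpace.comap (U (t+1)) inferInstance) P := by
    intro t
    have hdisj : Disjoint (Set.Iic t) ({t+1} : Set ℕ) := by
      rw [Set.disjoint_singleton_right]; simp
    have h := indep_iSup_of_disjoint (fun i => (hUmeas i).comap_le) hUindep hdisj
    simpa [hm] using h
  have hprod : ∀ t (A : Finset Ω) (B : Set ℝ), MeasurableSet B →
      P ({ω | S t ω = A} ∩ (U (t+1)) ⁻¹' B)
        = P {ω | S t ω = A} * P ((U (t+1)) ⁻¹' B) := by
    intro t A B hB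
    exact (Indep_iff _ _ _).mp (hindep t) _ _ (hSmeas t A) ⟨B, hB, rfl⟩
  -- uniform distribution computation
  have hUP : ∀ (t : ℕ) (c : ℝ), 0 ≤ c → c ≤ 1 →
      (P ((U t) ⁻¹' Set.Iic c)).toReal = c := by
    intro t c h0 h1
    have h : P ((U t) ⁻¹' Set.Iic c) = ENNReal.ofReal c := by
      rw [← Measure.map_apply (hUmeas t) measurableSet_Iic, hUunif t,
        Measure.restrict_apply measurableSet_Iic]
      have : Set.Iic c ∩ Set.Icc 0 1 = Set.Icc 0 c := by
        ext u
        simp only [Set.mem_inter_iff, Set.mem_Iic, Set.mem_Icc]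
        constructor
        · rintro ⟨h1', h2', _⟩; exact ⟨h2', h1'⟩
        · rintro ⟨h1', h2'⟩; exact ⟨h2', h1', le_trans h2' h1⟩
      rw [this, Real.volume_Icc]
      norm_num
    rw [h, ENNReal.toReal_ofReal h0]
  -- partition of membership events
  have hPmem : ∀ t (z : Ω), (P {ω | z ∈ S t ω}).toReal
      = ∑ A ∈ univ.filter (fun A : Finset Ω => z ∈ A), (P {ω | S t ω = A}).toReal := by
    intro t z
    have hdec : {ω | z ∈ S t ω}
        = ⋃ A ∈ univ.filter (fun A : Finset Ω => z ∈ A), {ω | S t ω = A} := by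
      ext ω
      simp only [Set.mem_setOf_eq, Set.mem_iUnion, Finset.mem_filter, Finset.mem_univ, true_and]
      constructor
      · intro h; exact ⟨S t ω, h, rfl⟩
      · rintro ⟨A, hA, rfl⟩; exact hA
    rw [hdec, measure_biUnion_finset ?_ ?_, ENNReal.toReal_sum fun A _ => measure_ne_top P _]
    · intro A hA B hB hAB
      exact Set.disjoint_left.mpr fun ω h1 h2 => hAB (h1.symm.trans h2)
    · intro A _
      exact hm_le t _ (hSmeas t A)
  -- main numerator identity
  have main : ∀ t y, (∑ x ∈ S₀, π x * Kpow t x y)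
      = π y * (P {ω | y ∈ S t ω}).toReal := by
    intro t
    induction t with
    | zero =>
        intro y
        by_cases hy : y ∈ S₀
        · have h1 : {ω | y ∈ S 0 ω} = Set.univ := by ext ω; simp [hS0, hy]
          rw [h1, measure_univ]
          simp only [ENNReal.toReal_one, mul_one, hKpow0, mul_ite, mul_one, mul_zero]
          rw [Finset.sum_ite_eq' S₀ y π] at *
          simp [hy]
        · have h1 : {ω | y ∈ S 0 ω} = ∅ := by ext ω; simp [hS0, hy]
          rw [h1, measure_empty]
          simp only [ENNReal.toReal_zero, mul_zero, hKpow0, mul_ite, mul_one, mul_zero]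
          rw [Finset.sum_ite_eq' S₀ y π]
          simp [hy]
    | succ t ih =>
        intro y
        by_cases hy : π y = 0
        · rw [hy, zero_mul]
          have hle : ∑ x ∈ S₀, π x * Kpow (t+1) x y ≤ 0 := by
            calc ∑ x ∈ S₀, π x * Kpow (t+1) x y ≤ ∑ x, π x * Kpow (t+1) x y :=
                  Finset.sum_le_sum_of_subset_of_nonneg (Finset.subset_univ _)
                    (fun x _ _ => mul_nonneg (hπnonneg x) (hKpowNN _ x y))
              _ = π y := hstatpow _ y
              _ = 0 := hy
          have hge : 0 ≤ ∑ x ∈ S₀, π x * Kpow (t+1) x y :=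
            Finset.sum_nonneg fun x _ => mul_nonneg (hπnonneg x) (hKpowNN _ x y)
          linarith
        · have hy' : 0 < π y := lt_of_le_of_ne (hπnonneg y) (Ne.symm hy)
          -- decompose the event
          have hdecomp : {ω | y ∈ S (t+1) ω}
              = ⋃ A ∈ (Finset.univ : Finset (Finset Ω)), ({ω | S t ω = A}
                ∩ (U (t+1)) ⁻¹' Set.Iic ((∑ x ∈ A, π x * K x y) / π y)) := by
            ext ω
            simp only [Set.mem_setOf_eq, Set.mem_iUnion, Finset.mem_univ, Set.mem_inter_iff,
              Set.mem_preimage, Set.mem_Iic, exists_true_left, hSrec, Finset.mem_filter, true_and]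
            constructor
            · intro h
              exact ⟨S t ω, rfl, (le_div_iff₀ hy').mpr h⟩
            · rintro ⟨A, rfl, h⟩
              exact (le_div_iff₀ hy').mp h
          have hPsucc : (P {ω | y ∈ S (t+1) ω}).toReal
              = ∑ A : Finset Ω, (P {ω | S t ω = A}).toReal
                  * ((∑ x ∈ A, π x * K x y) / π y) := by
            rw [hdecomp, measure_biUnion_finset ?_ ?_,
              ENNReal.toReal_sum fun A _ => measure_ne_top P _]
            · refine Finset.sum_congr rfl fun A _ => ?_
              rw [hprod t A _ measurableSet_Iic, ENNReal.toReal_mul,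
                hUP (t+1) _ (div_nonneg (hQnn A y) (le_of_lt hy'))
                  ((div_le_one hy').mpr (hQle A y))]
            · intro A hA B hB hAB
              exact Set.disjoint_left.mpr fun ω h1 h2 => hAB (h1.1.symm.trans h2.1)
            · intro A _
              exact (hm_le t _ (hSmeas t A)).inter ((hUmeas (t+1)) measurableSet_Iic)
          rw [hPsucc, Finset.mul_sum]
          calc ∑ x ∈ S₀, π x * Kpow (t+1) x y
              = ∑ x ∈ S₀, ∑ z, π x * Kpow t x z * K z y := by
                refine Finset.sum_congr rfl fun x _ => ?_
                rw [hKpowS', Finset.mul_sum]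
                exact Finset.sum_congr rfl fun z _ => by ring
            _ = ∑ z, (∑ x ∈ S₀, π x * Kpow t x z) * K z y := by
                rw [Finset.sum_comm]
                exact Finset.sum_congr rfl fun z _ => by rw [Finset.sum_mul]
            _ = ∑ z, π z * (P {ω | z ∈ S t ω}).toReal * K z y := by
                exact Finset.sum_congr rfl fun z _ => by rw [ih z]
            _ = ∑ z, (∑ A ∈ univ.filter (fun A : Finset Ω => z ∈ A),
                  (P {ω | S t ω = A}).toReal) * (π z * K z y) := by
                exact Finset.sum_congr rfl fun z _ => by rw [hPmem t z]; ring
            _ = ∑ z, ∑ A : Finset Ω,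
                  (if z ∈ A then (P {ω | S t ω = A}).toReal * (π z * K z y) else 0) := by
                refine Finset.sum_congr rfl fun z _ => ?_
                rw [Finset.sum_mul, Finset.sum_filter]
            _ = ∑ A : Finset Ω, ∑ z,
                  (if z ∈ A then (P {ω | S t ω = A}).toReal * (π z * K z y) else 0) :=
                Finset.sum_comm
            _ = ∑ A : Finset Ω, (P {ω | S t ω = A}).toReal * ∑ z ∈ A, π z * K z y := by
                refine Finset.sum_congr rfl fun A _ => ?_
                rw [Finset.mul_sum, Finset.sum_ite_mem, Finset.univ_inter]
            _ = ∑ A : Finset Ω, π y * ((P {ω | S t ω = A}).toReal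
                  * ((∑ x ∈ A, π x * K x y) / π y)) := by
                refine Finset.sum_congr rfl fun A _ => ?_
                field_simp
  intro t y
  rw [main t y, mul_div_right_comm]
end

section
/- Let {S_t} be the evolving set process for a 1/2-lazy reversible kernel K on a finite state space Ω with conductance Φ, and let M_t = S_t if π(S_t) ≤ 1/2 and M_t = S_t^c otherwise. Then for any starting set S and any α > 0 and t ∈ ℕ: P_{S_0=S}[π(M_t) ≥ α] ≤ (1 − Φ²/2)^t · √(min(π(S), 1−π(S))/α). -/
open MeasureTheory ProbabilityTheory Finset

set_option maxHeartbeats 1600000 in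
/-- scalar inequality at the heart of the drift bound -/
lemma es_scalar (p Q Φ : ℝ) (hp : 0 < p) (hQ0 : 0 ≤ Q) (hQp : 2*Q ≤ p)
    (hΦ0 : 0 ≤ Φ) (hΦQ : Φ * p ≤ Q) :
    Real.sqrt ((1/2) * (p/2+Q)) + Real.sqrt ((1/2) * (p/2-Q)) ≤ (1 - Φ^2/2) * Real.sqrt p := by
  have hu : (0:ℝ) ≤ (1/2) * (p/2+Q) := by nlinarith
  have hv : (0:ℝ) ≤ (1/2) * (p/2-Q) := by nlinarith
  have hΦhalf : Φ ≤ 1/2 := by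
    by_contra h
    push_neg at h
    nlinarith [mul_lt_mul_of_pos_right h hp]
  have hc0 : (0:ℝ) ≤ 1 - Φ^2/2 := by nlinarith
  set a := Real.sqrt ((1/2) * (p/2+Q)) with ha
  set b := Real.sqrt ((1/2) * (p/2-Q)) with hb
  have ha0 : 0 ≤ a := Real.sqrt_nonneg _
  have hb0 : 0 ≤ b := Real.sqrt_nonneg _
  have ha2 : a^2 = (1/2) * (p/2+Q) := Real.sq_sqrt hu
  have hb2 : b^2 = (1/2) * (p/2-Q) := Real.sq_sqrt hv
  have hw0 : (0:ℝ) ≤ p^2/4 - Q^2 := by nlinarith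
  have habw : a*b = Real.sqrt (p^2/4 - Q^2) / 2 := by
    rw [ha, hb, ← Real.sqrt_mul hu]
    rw [show (1/2) * (p/2+Q) * ((1/2) * (p/2-Q)) = (p^2/4 - Q^2) * (1/4) by ring]
    rw [Real.sqrt_mul hw0, show (1/4 : ℝ) = (1/2)^2 by norm_num, Real.sqrt_sq (by norm_num)]
    ring
  have hQ2 : Φ^2*p^2 ≤ Q^2 := by
    have h := pow_le_pow_left₀ (mul_nonneg hΦ0 hp.le) hΦQ 2
    nlinarith [h]
  have hr0 : (0:ℝ) ≤ (1-Φ^2/2)^2*p - p/2 := by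
    have h58 : (1:ℝ)/2 ≤ (1-Φ^2/2)^2 := by nlinarith [sq_nonneg (Φ^2)]
    nlinarith [mul_le_mul_of_nonneg_right h58 hp.le]
  have hwr2 : p^2/4 - Q^2 ≤ ((1-Φ^2/2)^2*p - p/2)^2 := by
    nlinarith [hQ2, sq_nonneg (p*Φ^2*(Φ^2-4)), sq_nonneg (p*Φ^2)]
  have hwr : Real.sqrt (p^2/4 - Q^2) ≤ (1-Φ^2/2)^2*p - p/2 := by
    calc Real.sqrt (p^2/4 - Q^2) ≤ Real.sqrt (((1-Φ^2/2)^2*p - p/2)^2) := Real.sqrt_le_sqrt hwr2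
    _ = (1-Φ^2/2)^2*p - p/2 := Real.sqrt_sq hr0
  have hL2 : (a+b)^2 ≤ (1-Φ^2/2)^2 * p := by
    have hexp : (a+b)^2 = a^2 + b^2 + 2*(a*b) := by ring
    rw [hexp, ha2, hb2, habw]
    linarith [hwr]
  have hR2 : ((1 - Φ^2/2) * Real.sqrt p)^2 = (1-Φ^2/2)^2 * p := by
    rw [mul_pow, Real.sq_sqrt hp.le]
  have hfin : (a+b)^2 ≤ ((1 - Φ^2/2) * Real.sqrt p)^2 := by rw [hR2]; linarith
  calc a + b = Real.sqrt ((a+b)^2) := (Real.sqrt_sq (by linarith)).symm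
  _ ≤ Real.sqrt (((1 - Φ^2/2) * Real.sqrt p)^2) := Real.sqrt_le_sqrt hfin
  _ = (1 - Φ^2/2) * Real.sqrt p := Real.sqrt_sq (mul_nonneg hc0 (Real.sqrt_nonneg _))

lemma es_integrable_on {s : Set ℝ} (hs : MeasurableSet s) (hfin : volume s < ⊤)
    (f : ℝ → ℝ) (hm : Measurable f) (C : ℝ) (hb : ∀ u, |f u| ≤ C) :
    IntegrableOn f s volume := by
  refine Integrable.mono' (g := fun _ => C) ?_ hm.aestronglyMeasurable ?_
  · exact integrableOn_const hfin.ne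
  · exact Filter.Eventually.of_forall fun u => by rw [Real.norm_eq_abs]; exact hb u

lemma es_integral_piece (c v q : ℝ) (hc : 0 ≤ c) (hv : 0 ≤ v) (hq0 : 0 ≤ q) (hqv : q ≤ v) :
    ∫ u in Set.Icc (0:ℝ) c, (if u * v ≤ q then v else 0) = min (c*v) q := by
  rcases hv.eq_or_lt with h0 | hv'
  · have hq : q = 0 := le_antisymm (hqv.trans h0.ge) hq0
    simp [← h0, hq]
  · have hrw : (fun u : ℝ => if u * v ≤ q then v else 0)
        = Set.indicator (Set.Iic (q/v)) (fun _ => v) := by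
      funext u
      simp only [Set.indicator_apply, Set.mem_Iic]
      simp [le_div_iff₀ hv']
    have hset : Set.Icc (0:ℝ) c ∩ Set.Iic (q/v) = Set.Icc 0 (min c (q/v)) := by
      rw [← Set.Ici_inter_Iic, Set.inter_assoc, Set.Iic_inter_Iic, Set.Ici_inter_Iic]
    rw [hrw, setIntegral_indicator measurableSet_Iic, setIntegral_const,
      hset, measureReal_def, Real.volume_Icc, sub_zero,
      ENNReal.toReal_ofReal (le_min hc (div_nonneg hq0 hv'.le)), smul_eq_mul,
      min_mul_of_nonneg _ _ hv'.le, div_mul_cancel₀ _ hv'.ne']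

lemma es_sqrt_integral {s : Set ℝ} (hs : MeasurableSet s) (L : ℝ) (hL : 0 < L)
    (hvol : volume s = ENNReal.ofReal L) (f : ℝ → ℝ) (hf0 : ∀ u, 0 ≤ f u)
    (hfm : Measurable f) (C : ℝ) (hfb : ∀ u, f u ≤ C) :
    ∫ u in s, Real.sqrt (f u) ≤ Real.sqrt (L * ∫ u in s, f u) := by
  have hfin : volume s < ⊤ := by rw [hvol]; exact ENNReal.ofReal_lt_top
  have hfi : IntegrableOn f s volume :=
    es_integrable_on hs hfin f hfm (max C 0) fun u => by
      rw [abs_of_nonneg (hf0 u)]; exact (hfb u).trans (le_max_left _ _)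
  have hsfi : IntegrableOn (fun u => Real.sqrt (f u)) s volume :=
    es_integrable_on hs hfin _ (hfm.sqrt) (Real.sqrt (max C 0)) fun u => by
      rw [abs_of_nonneg (Real.sqrt_nonneg _)]
      exact Real.sqrt_le_sqrt ((hfb u).trans (le_max_left _ _))
  set J := ∫ u in s, f u with hJ
  have hJ0 : 0 ≤ J := setIntegral_nonneg hs fun u _ => hf0 u
  rcases hJ0.eq_or_lt with h0 | hJpos
  · -- J = 0 : f vanishes a.e.
    have hae : f =ᵐ[volume.restrict s] 0 := by
      rw [← integral_eq_zero_iff_of_nonneg (fun u => hf0 u) hfi]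
      exact h0.symm
    have hae2 : (fun u => Real.sqrt (f u)) =ᵐ[volume.restrict s] (fun _ => (0:ℝ)) :=
      hae.mono fun u hu => by simp only [Pi.zero_apply] at hu; simp [hu]
    have : ∫ u in s, Real.sqrt (f u) = 0 := by
      rw [integral_congr_ae hae2, integral_const]; simp
    rw [this]
    exact Real.sqrt_nonneg _
  · set σ := Real.sqrt J / Real.sqrt L with hσdef
    have hsJ : 0 < Real.sqrt J := Real.sqrt_pos.mpr hJpos
    have hsL : 0 < Real.sqrt L := Real.sqrt_pos.mpr hL
    have hσ : 0 < σ := div_pos hsJ hsL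
    have hpt : ∀ u, Real.sqrt (f u) ≤ f u / (2*σ) + σ/2 := by
      intro u
      have h1 : (0:ℝ) ≤ (Real.sqrt (f u) - σ)^2 := sq_nonneg _
      have h2 : Real.sqrt (f u)^2 = f u := Real.sq_sqrt (hf0 u)
      have h3 : f u / (2*σ) + σ/2 = (f u + σ^2)/(2*σ) := by field_simp
      rw [h3, le_div_iff₀ (by positivity)]
      nlinarith [h1, h2]
    have hint : ∫ u in s, Real.sqrt (f u) ≤ J/(2*σ) + σ/2 * L := by
      have h1 : ∫ u in s, (f u / (2*σ) + σ/2) = J/(2*σ) + σ/2 * L := by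
        rw [integral_add (hfi.div_const _) (integrableOn_const hfin.ne)]
        rw [integral_div, setIntegral_const, measureReal_def, hvol, ENNReal.toReal_ofReal hL.le,
          smul_eq_mul]
        ring
      rw [← h1]
      exact integral_mono hsfi ((hfi.div_const _).add (integrableOn_const hfin.ne))
        (fun u => hpt u)
    have heq : J/(2*σ) + σ/2 * L = Real.sqrt (L * J) := by
      rw [Real.sqrt_mul hL.le]
      set sJ := Real.sqrt J with hsJdef
      set sL := Real.sqrt L with hsLdef
      have hJ' : sJ * sJ = J := Real.mul_self_sqrt hJ0
      have hL' : sL * sL = L := Real.mul_self_sqrt hL.le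
      rw [hσdef, ← hJ', ← hL']
      field_simp
      ring
    rw [← heq]
    exact hint

section EvolvingSets

variable {Ω : Type*} [Fintype Ω] [DecidableEq Ω]

/-- total mass of a set -/
def esP (π : Ω → ℝ) (A : Finset Ω) : ℝ := ∑ x ∈ A, π x

/-- flow into a point -/
def esQ (K : Ω → Ω → ℝ) (π : Ω → ℝ) (A : Finset Ω) (y : Ω) : ℝ := ∑ x ∈ A, π x * K x y

/-- one step of the evolving set process -/
noncomputable def esNxt (K : Ω → Ω → ℝ) (π : Ω → ℝ) (A : Finset Ω) (u : ℝ) : Finset Ω :=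
  Finset.univ.filter (fun y => u * π y ≤ ∑ x ∈ A, π x * K x y)

/-- the sqrt-min functional -/
noncomputable def esM (π : Ω → ℝ) (A : Finset Ω) : ℝ :=
  Real.sqrt (min (esP π A) (1 - esP π A))

/-- deterministic evolution map -/
noncomputable def esG (K : Ω → Ω → ℝ) (π : Ω → ℝ) (S₀ : Finset Ω) :
    (t : ℕ) → (Fin t → ℝ) → Finset Ω
  | 0, _ => S₀
  | (t+1), v => esNxt K π (esG K π S₀ t (fun i => v i.castSucc)) (v (Fin.last t))

instance : MeasurableSpace (Finset Ω) := ⊤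

instance : MeasurableSingletonClass (Finset Ω) := ⟨fun _ => trivial⟩

lemma es_meas_from_finset {β : Type*} [MeasurableSpace β] (f : Finset Ω → β) :
    Measurable f := fun _ _ => trivial

variable {K : Ω → Ω → ℝ} {π : Ω → ℝ}

lemma esP_nonneg (hπnonneg : ∀ x, 0 ≤ π x) (A : Finset Ω) : 0 ≤ esP π A :=
  Finset.sum_nonneg fun x _ => hπnonneg x

lemma esP_le_one (hπnonneg : ∀ x, 0 ≤ π x) (hπsum : ∑ x, π x = 1) (A : Finset Ω) :
    esP π A ≤ 1 := by
  rw [← hπsum]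
  exact Finset.sum_le_sum_of_subset_of_nonneg (Finset.subset_univ A) fun x _ _ => hπnonneg x

lemma esP_compl (hπsum : ∑ x, π x = 1) (A : Finset Ω) : esP π Aᶜ = 1 - esP π A := by
  have := Finset.sum_add_sum_compl A π
  rw [hπsum] at this
  unfold esP
  linarith

lemma esQ_nonneg (hKnonneg : ∀ x y, 0 ≤ K x y) (hπnonneg : ∀ x, 0 ≤ π x)
    (A : Finset Ω) (y : Ω) : 0 ≤ esQ K π A y :=
  Finset.sum_nonneg fun x _ => mul_nonneg (hπnonneg x) (hKnonneg x y)

lemma esQ_univ (hKrow : ∀ x, ∑ y, K x y = 1) (hrev : ∀ x y, π x * K x y = π y * K y x)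
    (y : Ω) : esQ K π Finset.univ y = π y := by
  unfold esQ
  calc ∑ x, π x * K x y = ∑ x, π y * K y x := Finset.sum_congr rfl fun x _ => hrev x y
  _ = π y := by rw [← Finset.mul_sum, hKrow, mul_one]

lemma esQ_le (hKnonneg : ∀ x y, 0 ≤ K x y) (hKrow : ∀ x, ∑ y, K x y = 1)
    (hrev : ∀ x y, π x * K x y = π y * K y x) (hπnonneg : ∀ x, 0 ≤ π x)
    (A : Finset Ω) (y : Ω) : esQ K π A y ≤ π y := by
  rw [← esQ_univ hKrow hrev y]
  exact Finset.sum_le_sum_of_subset_of_nonneg (Finset.subset_univ A)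
    fun x _ _ => mul_nonneg (hπnonneg x) (hKnonneg x y)

lemma esQ_add_compl (hKrow : ∀ x, ∑ y, K x y = 1)
    (hrev : ∀ x y, π x * K x y = π y * K y x) (A : Finset Ω) (y : Ω) :
    esQ K π A y + esQ K π Aᶜ y = π y := by
  rw [← esQ_univ hKrow hrev y]
  exact Finset.sum_add_sum_compl A _

lemma esQ_mem (hKnonneg : ∀ x y, 0 ≤ K x y) (hlazy : ∀ x, 1/2 ≤ K x x)
    (hπnonneg : ∀ x, 0 ≤ π x) (A : Finset Ω) {y : Ω} (hy : y ∈ A) :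
    π y / 2 ≤ esQ K π A y := by
  have h1 : π y * K y y ≤ esQ K π A y :=
    Finset.single_le_sum (f := fun x => π x * K x y)
      (fun x _ => mul_nonneg (hπnonneg x) (hKnonneg x y)) hy
  have h2 : π y * (1/2) ≤ π y * K y y := mul_le_mul_of_nonneg_left (hlazy y) (hπnonneg y)
  nlinarith

lemma esQ_not_mem (hKnonneg : ∀ x y, 0 ≤ K x y) (hKrow : ∀ x, ∑ y, K x y = 1)
    (hlazy : ∀ x, 1/2 ≤ K x x) (hrev : ∀ x y, π x * K x y = π y * K y x)
    (hπnonneg : ∀ x, 0 ≤ π x) (A : Finset Ω) {y : Ω} (hy : y ∉ A) :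
    esQ K π A y ≤ π y / 2 := by
  have h1 := esQ_mem hKnonneg hlazy hπnonneg Aᶜ (Finset.mem_compl.mpr hy)
  have h2 := esQ_add_compl hKrow hrev A y
  linarith

lemma esQ_total (hKrow : ∀ x, ∑ y, K x y = 1) (A : Finset Ω) :
    ∑ y, esQ K π A y = esP π A := by
  unfold esQ esP
  rw [Finset.sum_comm]
  exact Finset.sum_congr rfl fun x _ => by rw [← Finset.mul_sum, hKrow, mul_one]

lemma esQv_le (hKnonneg : ∀ x y, 0 ≤ K x y) (hKrow : ∀ x, ∑ y, K x y = 1)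
    (hlazy : ∀ x, 1/2 ≤ K x x) (hπnonneg : ∀ x, 0 ≤ π x) (A : Finset Ω) :
    ∑ y ∈ Aᶜ, esQ K π A y ≤ esP π A / 2 := by
  unfold esQ esP
  rw [Finset.sum_comm]
  have hle : ∀ x ∈ A, ∑ y ∈ Aᶜ, π x * K x y ≤ π x * (1/2) := by
    intro x hx
    rw [← Finset.mul_sum]
    apply mul_le_mul_of_nonneg_left _ (hπnonneg x)
    have h1 : K x x + ∑ y ∈ Aᶜ, K x y ≤ ∑ y ∈ A, K x y + ∑ y ∈ Aᶜ, K x y := by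
      have := Finset.single_le_sum (f := fun y => K x y) (fun y _ => hKnonneg x y) hx
      linarith
    rw [Finset.sum_add_sum_compl A, hKrow] at h1
    linarith [hlazy x]
    
  calc ∑ x ∈ A, ∑ y ∈ Aᶜ, π x * K x y ≤ ∑ x ∈ A, π x * (1/2) := Finset.sum_le_sum hle
  _ = (∑ x ∈ A, π x) / 2 := by rw [← Finset.sum_mul]; ring

lemma esQv_compl (hrev : ∀ x y, π x * K x y = π y * K y x) (A : Finset Ω) :
    ∑ y ∈ A, esQ K π Aᶜ y = ∑ y ∈ Aᶜ, esQ K π A y := by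
  unfold esQ
  calc ∑ y ∈ A, ∑ x ∈ Aᶜ, π x * K x y = ∑ y ∈ A, ∑ x ∈ Aᶜ, π y * K y x :=
    Finset.sum_congr rfl fun y _ => Finset.sum_congr rfl fun x _ => hrev x y
  _ = ∑ x ∈ Aᶜ, ∑ y ∈ A, π y * K y x := Finset.sum_comm
  _ = ∑ y ∈ Aᶜ, ∑ x ∈ A, π x * K x y := rfl

lemma esNxt_measurable (A : Finset Ω) : Measurable (fun u : ℝ => esNxt K π A u) := by
  apply measurable_to_countable'
  intro B
  have hset : (fun u : ℝ => esNxt K π A u) ⁻¹' {B}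
      = ⋂ y : Ω, {u : ℝ | (u * π y ≤ esQ K π A y) ↔ y ∈ B} := by
    ext u
    simp only [Set.mem_preimage, Set.mem_singleton_iff, Set.mem_iInter, Set.mem_setOf_eq]
    constructor
    · intro h y
      rw [← h]
      simp [esNxt, esQ]
    · intro h
      ext y
      simp only [esNxt, Finset.mem_filter, Finset.mem_univ, true_and]
      exact (h y).symm.trans (Iff.symm (by rfl)) |>.symm
  rw [hset]
  apply MeasurableSet.iInter
  intro y
  by_cases hy : y ∈ B
  · simp only [hy, iff_true]
    exact measurableSet_le (measurable_id.mul_const _) measurable_const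
  · simp only [hy, iff_false]
    exact (measurableSet_le (measurable_id.mul_const _) measurable_const).compl

lemma esG_measurable (S₀ : Finset Ω) : ∀ t : ℕ, Measurable (esG K π S₀ t)
  | 0 => measurable_const
  | (t+1) => by
    apply measurable_to_countable'
    intro B
    have hset : (esG K π S₀ (t+1)) ⁻¹' {B} = ⋃ A : Finset Ω,
        ((fun v : Fin (t+1) → ℝ => esG K π S₀ t (fun i => v i.castSucc)) ⁻¹' {A}
          ∩ (fun v : Fin (t+1) → ℝ => v (Fin.last t)) ⁻¹' {u : ℝ | esNxt K π A u = B}) := by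
      ext v
      simp only [Set.mem_preimage, Set.mem_singleton_iff, Set.mem_iUnion, Set.mem_inter_iff,
        Set.mem_setOf_eq]
      constructor
      · intro h
        exact ⟨esG K π S₀ t (fun i => v i.castSucc), rfl, h⟩
      · rintro ⟨A, h1, h2⟩
        show esNxt K π (esG K π S₀ t (fun i => v i.castSucc)) (v (Fin.last t)) = B
        rw [h1]
        exact h2
    rw [hset]
    apply MeasurableSet.iUnion
    intro A
    apply MeasurableSet.inter
    · exact (esG_measurable S₀ t).comp
        (measurable_pi_lambda _ fun i => measurable_pi_apply _) (measurableSet_singleton A)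
    · exact measurable_pi_apply _ ((esNxt_measurable A) (measurableSet_singleton B))

lemma es_combine (f : ℝ → ℝ) (hm : Measurable f) (hf0 : ∀ u, 0 ≤ f u) (hf1 : ∀ u, f u ≤ 1)
    (p' Q : ℝ) (hQ0 : 0 ≤ Q) (hQp : 2*Q ≤ p')
    (hlow : (∫ u in Set.Icc (0:ℝ) (1/2), f u) = p'/2 + Q
      ∨ (∫ u in Set.Icc (0:ℝ) (1/2), f u) = p'/2 - Q)
    (hfull : (∫ u in Set.Icc (0:ℝ) 1, f u) = p')
    (Φ : ℝ) (hΦ0 : 0 ≤ Φ) (hΦc : 0 < p' → Φ * p' ≤ Q) :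
    (∫ u in Set.Icc (0:ℝ) 1, Real.sqrt (f u)) ≤ (1 - Φ^2/2) * Real.sqrt p' := by
  have habs : ∀ u, |f u| ≤ 1 := fun u => abs_le.mpr ⟨by linarith [hf0 u], hf1 u⟩
  have hfin1 : volume (Set.Icc (0:ℝ) 1) < ⊤ := by
    rw [Real.volume_Icc]; exact ENNReal.ofReal_lt_top
  have hIf : IntegrableOn f (Set.Icc (0:ℝ) 1) volume :=
    es_integrable_on measurableSet_Icc hfin1 f hm 1 habs
  have hsub1 : Set.Icc (0:ℝ) (1/2) ⊆ Set.Icc 0 1 := Set.Icc_subset_Icc_right (by norm_num)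
  have hsub2 : Set.Ioc (1/2:ℝ) 1 ⊆ Set.Icc 0 1 :=
    Set.Ioc_subset_Icc_self.trans (Set.Icc_subset_Icc_left (by norm_num))
  have hIf1 : IntegrableOn f (Set.Icc (0:ℝ) (1/2)) volume := hIf.mono_set hsub1
  have hIf2 : IntegrableOn f (Set.Ioc (1/2:ℝ) 1) volume := hIf.mono_set hsub2
  have hsqm : Measurable fun u => Real.sqrt (f u) := hm.sqrt
  have hsqabs : ∀ u, |Real.sqrt (f u)| ≤ 1 := fun u => by
    rw [abs_of_nonneg (Real.sqrt_nonneg _)]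
    have h1 : Real.sqrt (f u) ≤ Real.sqrt 1 := Real.sqrt_le_sqrt (hf1 u)
    simpa using h1
  have hIs : IntegrableOn (fun u => Real.sqrt (f u)) (Set.Icc (0:ℝ) 1) volume :=
    es_integrable_on measurableSet_Icc hfin1 _ hsqm 1 hsqabs
  have hunion : Set.Icc (0:ℝ) 1 = Set.Icc 0 (1/2) ∪ Set.Ioc (1/2) 1 :=
    (Set.Icc_union_Ioc_eq_Icc (by norm_num) (by norm_num)).symm
  have hdisj : Disjoint (Set.Icc (0:ℝ) (1/2)) (Set.Ioc (1/2) 1) := by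
    rw [Set.disjoint_left]
    rintro x ⟨_, h1⟩ ⟨h2, _⟩
    exact absurd h1 (not_le.mpr h2)
  have hsplitf : (∫ u in Set.Icc (0:ℝ) 1, f u)
      = (∫ u in Set.Icc (0:ℝ) (1/2), f u) + ∫ u in Set.Ioc (1/2:ℝ) 1, f u := by
    rw [hunion]
    exact setIntegral_union hdisj measurableSet_Ioc hIf1 hIf2
  have hsplits : (∫ u in Set.Icc (0:ℝ) 1, Real.sqrt (f u))
      = (∫ u in Set.Icc (0:ℝ) (1/2), Real.sqrt (f u))
        + ∫ u in Set.Ioc (1/2:ℝ) 1, Real.sqrt (f u) := by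
    rw [hunion]
    exact setIntegral_union hdisj measurableSet_Ioc (hIs.mono_set hsub1) (hIs.mono_set hsub2)
  have hv1 : volume (Set.Icc (0:ℝ) (1/2)) = ENNReal.ofReal (1/2) := by
    rw [Real.volume_Icc, sub_zero]
  have hv2 : volume (Set.Ioc (1/2:ℝ) 1) = ENNReal.ofReal (1/2) := by
    rw [Real.volume_Ioc]
    norm_num
  have hcs1 : (∫ u in Set.Icc (0:ℝ) (1/2), Real.sqrt (f u))
      ≤ Real.sqrt ((1/2) * ∫ u in Set.Icc (0:ℝ) (1/2), f u) :=
    es_sqrt_integral measurableSet_Icc (1/2) (by norm_num) hv1 f hf0 hm 1 hf1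
  have hcs2 : (∫ u in Set.Ioc (1/2:ℝ) 1, Real.sqrt (f u))
      ≤ Real.sqrt ((1/2) * ∫ u in Set.Ioc (1/2:ℝ) 1, f u) :=
    es_sqrt_integral measurableSet_Ioc (1/2) (by norm_num) hv2 f hf0 hm 1 hf1
  have hp'0 : 0 ≤ p' := by linarith
  have hmain : (∫ u in Set.Icc (0:ℝ) 1, Real.sqrt (f u))
      ≤ Real.sqrt ((1/2) * (p'/2 + Q)) + Real.sqrt ((1/2) * (p'/2 - Q)) := by
    rcases hlow with h | h
    · have h2 : (∫ u in Set.Ioc (1/2:ℝ) 1, f u) = p'/2 - Q := by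
        rw [hfull, h] at hsplitf; linarith
      rw [h] at hcs1
      rw [h2] at hcs2
      rw [hsplits]
      exact add_le_add hcs1 hcs2
    · have h2 : (∫ u in Set.Ioc (1/2:ℝ) 1, f u) = p'/2 + Q := by
        rw [hfull, h] at hsplitf; linarith
      rw [h] at hcs1
      rw [h2] at hcs2
      rw [hsplits]
      have := add_le_add hcs1 hcs2
      linarith
  rcases hp'0.eq_or_lt with h0 | hp'
  · have hQz : Q = 0 := by linarith
    rw [← h0, hQz] at hmain
    rw [← h0]
    simpa using hmain
  · exact hmain.trans (es_scalar p' Q Φ hp' hQ0 hQp hΦ0 (hΦc hp'))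

/-- the set of conductance ratios -/
def esCond (K : Ω → Ω → ℝ) (π : Ω → ℝ) : Set ℝ :=
  {r : ℝ | ∃ A : Finset Ω, 0 < ∑ x ∈ A, π x ∧ (∑ x ∈ A, π x) ≤ 1/2 ∧
    r = (∑ x ∈ A, ∑ y ∈ Aᶜ, π x * K x y) / ∑ x ∈ A, π x}

lemma esCond_bddBelow (hKnonneg : ∀ x y, 0 ≤ K x y) (hπnonneg : ∀ x, 0 ≤ π x) :
    BddBelow (esCond K π) := by
  refine ⟨0, fun r hr => ?_⟩
  obtain ⟨B, hB1, _, rfl⟩ := hr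
  exact div_nonneg (Finset.sum_nonneg fun x _ => Finset.sum_nonneg fun y _ =>
    mul_nonneg (hπnonneg x) (hKnonneg x y)) hB1.le

lemma esPhi_nonneg (hKnonneg : ∀ x y, 0 ≤ K x y) (hπnonneg : ∀ x, 0 ≤ π x) :
    0 ≤ sInf (esCond K π) := by
  apply Real.sInf_nonneg
  rintro r ⟨B, hB1, _, rfl⟩
  exact div_nonneg (Finset.sum_nonneg fun x _ => Finset.sum_nonneg fun y _ =>
    mul_nonneg (hπnonneg x) (hKnonneg x y)) hB1.le

lemma es_num_eq (A : Finset Ω) :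
    ∑ x ∈ A, ∑ y ∈ Aᶜ, π x * K x y = ∑ y ∈ Aᶜ, esQ K π A y := Finset.sum_comm

lemma esPhi_mul_le (hKnonneg : ∀ x y, 0 ≤ K x y) (hπnonneg : ∀ x, 0 ≤ π x)
    (A : Finset Ω) (h1 : 0 < esP π A) (h2 : esP π A ≤ 1/2) :
    sInf (esCond K π) * esP π A ≤ ∑ y ∈ Aᶜ, esQ K π A y := by
  have hmem : (∑ x ∈ A, ∑ y ∈ Aᶜ, π x * K x y) / (∑ x ∈ A, π x) ∈ esCond K π :=
    ⟨A, h1, h2, rfl⟩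
  have hle := csInf_le (esCond_bddBelow hKnonneg hπnonneg) hmem
  have hple : esP π A = ∑ x ∈ A, π x := rfl
  calc sInf (esCond K π) * esP π A
      ≤ ((∑ x ∈ A, ∑ y ∈ Aᶜ, π x * K x y) / (∑ x ∈ A, π x)) * esP π A :=
        mul_le_mul_of_nonneg_right hle (esP_nonneg hπnonneg A)
  _ = ∑ x ∈ A, ∑ y ∈ Aᶜ, π x * K x y := div_mul_cancel₀ _ h1.ne'
  _ = ∑ y ∈ Aᶜ, esQ K π A y := es_num_eq A

lemma esPhi_le_half (hKnonneg : ∀ x y, 0 ≤ K x y) (hKrow : ∀ x, ∑ y, K x y = 1)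
    (hlazy : ∀ x, 1/2 ≤ K x x) (hπnonneg : ∀ x, 0 ≤ π x) :
    sInf (esCond K π) ≤ 1/2 := by
  by_cases hne : (esCond K π).Nonempty
  · obtain ⟨r, B, h1, h2, rfl⟩ := hne
    refine (csInf_le (esCond_bddBelow hKnonneg hπnonneg) ⟨B, h1, h2, rfl⟩).trans ?_
    rw [div_le_iff₀ h1]
    have h3 := esQv_le hKnonneg hKrow hlazy hπnonneg B
    rw [es_num_eq B]
    have hple : esP π B = ∑ x ∈ B, π x := rfl
    rw [← hple]
    linarith
  · rw [Set.not_nonempty_iff_eq_empty.mp hne, Real.sInf_empty]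
    norm_num

lemma es_int_c (hKnonneg : ∀ x y, 0 ≤ K x y) (hKrow : ∀ x, ∑ y, K x y = 1)
    (hrev : ∀ x y, π x * K x y = π y * K y x) (hπnonneg : ∀ x, 0 ≤ π x)
    (A : Finset Ω) (c : ℝ) (hc : 0 ≤ c) :
    (∫ u in Set.Icc (0:ℝ) c, esP π (esNxt K π A u))
      = ∑ y, min (c * π y) (esQ K π A y) := by
  have hrw : ∀ u : ℝ, esP π (esNxt K π A u)
      = ∑ y, (if u * π y ≤ esQ K π A y then π y else 0) := by
    intro u
    rw [esP, esNxt, Finset.sum_filter]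
    rfl
  simp_rw [hrw]
  have hfin : volume (Set.Icc (0:ℝ) c) < ⊤ := by
    rw [Real.volume_Icc]; exact ENNReal.ofReal_lt_top
  rw [integral_finset_sum]
  · exact Finset.sum_congr rfl fun y _ => es_integral_piece c (π y) (esQ K π A y) hc
      (hπnonneg y) (esQ_nonneg hKnonneg hπnonneg A y) (esQ_le hKnonneg hKrow hrev hπnonneg A y)
  · intro y _
    have heq : (fun u : ℝ => if u * π y ≤ esQ K π A y then π y else 0)
        = Set.indicator {u : ℝ | u * π y ≤ esQ K π A y} (fun _ => π y) := by
      funext u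
      by_cases h : u * π y ≤ esQ K π A y <;> simp [Set.indicator_apply, h]
    rw [heq]
    exact Integrable.indicator (integrableOn_const hfin.ne)
      (measurableSet_le (measurable_id.mul_const _) measurable_const)

lemma es_int_full (hKnonneg : ∀ x y, 0 ≤ K x y) (hKrow : ∀ x, ∑ y, K x y = 1)
    (hrev : ∀ x y, π x * K x y = π y * K y x) (hπnonneg : ∀ x, 0 ≤ π x) (A : Finset Ω) :
    (∫ u in Set.Icc (0:ℝ) 1, esP π (esNxt K π A u)) = esP π A := by
  rw [es_int_c hKnonneg hKrow hrev hπnonneg A 1 zero_le_one, ← esQ_total hKrow A]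
  exact Finset.sum_congr rfl fun y _ => by
    rw [one_mul]
    exact min_eq_right (esQ_le hKnonneg hKrow hrev hπnonneg A y)

lemma es_int_low (hKnonneg : ∀ x y, 0 ≤ K x y) (hKrow : ∀ x, ∑ y, K x y = 1)
    (hlazy : ∀ x, 1/2 ≤ K x x) (hrev : ∀ x y, π x * K x y = π y * K y x)
    (hπnonneg : ∀ x, 0 ≤ π x) (A : Finset Ω) :
    (∫ u in Set.Icc (0:ℝ) (1/2), esP π (esNxt K π A u))
      = esP π A / 2 + ∑ y ∈ Aᶜ, esQ K π A y := by
  rw [es_int_c hKnonneg hKrow hrev hπnonneg A (1/2) (by norm_num)]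
  rw [← Finset.sum_add_sum_compl A]
  congr 1
  · rw [show esP π A / 2 = ∑ y ∈ A, π y / 2 by rw [esP, ← Finset.sum_div]]
    exact Finset.sum_congr rfl fun y hy => by
      rw [show (1/2) * π y = π y / 2 by ring]
      exact min_eq_left (esQ_mem hKnonneg hlazy hπnonneg A hy)
  · exact Finset.sum_congr rfl fun y hy => by
      rw [show (1/2) * π y = π y / 2 by ring]
      exact min_eq_right
        (esQ_not_mem hKnonneg hKrow hlazy hrev hπnonneg A (Finset.mem_compl.mp hy))

lemma esM_nonneg (A : Finset Ω) : 0 ≤ esM π A := Real.sqrt_nonneg _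

lemma esM_le_one (hπnonneg : ∀ x, 0 ≤ π x) (hπsum : ∑ x, π x = 1) (A : Finset Ω) :
    esM π A ≤ 1 := by
  have h : min (esP π A) (1 - esP π A) ≤ 1 :=
    (min_le_left _ _).trans (esP_le_one hπnonneg hπsum A)
  have := Real.sqrt_le_sqrt h
  simpa [esM] using this

lemma es_core (hKnonneg : ∀ x y, 0 ≤ K x y) (hKrow : ∀ x, ∑ y, K x y = 1)
    (hlazy : ∀ x, 1/2 ≤ K x x) (hrev : ∀ x y, π x * K x y = π y * K y x)
    (hπnonneg : ∀ x, 0 ≤ π x) (hπsum : ∑ x, π x = 1) (A : Finset Ω) :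
    (∫ u in Set.Icc (0:ℝ) 1, esM π (esNxt K π A u))
      ≤ (1 - (sInf (esCond K π))^2/2) * esM π A := by
  have hΦ0 : 0 ≤ sInf (esCond K π) := esPhi_nonneg hKnonneg hπnonneg
  have hp0 : 0 ≤ esP π A := esP_nonneg hπnonneg A
  have hp1 : esP π A ≤ 1 := esP_le_one hπnonneg hπsum A
  have hQv0 : 0 ≤ ∑ y ∈ Aᶜ, esQ K π A y :=
    Finset.sum_nonneg fun y _ => esQ_nonneg hKnonneg hπnonneg A y
  have hQvle : (∑ y ∈ Aᶜ, esQ K π A y) ≤ esP π A / 2 :=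
    esQv_le hKnonneg hKrow hlazy hπnonneg A
  have hφm : Measurable (fun u : ℝ => esP π (esNxt K π A u)) :=
    (es_meas_from_finset (esP π)).comp (esNxt_measurable A)
  have hφ0 : ∀ u : ℝ, 0 ≤ esP π (esNxt K π A u) := fun u => esP_nonneg hπnonneg _
  have hφ1 : ∀ u : ℝ, esP π (esNxt K π A u) ≤ 1 := fun u => esP_le_one hπnonneg hπsum _
  have hfull := es_int_full hKnonneg hKrow hrev hπnonneg A
  have hlow := es_int_low hKnonneg hKrow hlazy hrev hπnonneg A
  have hfin1 : volume (Set.Icc (0:ℝ) 1) < ⊤ := by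
    rw [Real.volume_Icc]; exact ENNReal.ofReal_lt_top
  have hIm : IntegrableOn (fun u => esM π (esNxt K π A u)) (Set.Icc (0:ℝ) 1) volume :=
    es_integrable_on measurableSet_Icc hfin1 _
      ((es_meas_from_finset (esM π)).comp (esNxt_measurable A)) 1
      (fun u => by
        rw [abs_of_nonneg (esM_nonneg _)]
        exact esM_le_one hπnonneg hπsum _)
  by_cases hA : esP π A ≤ 1/2
  · have hmono : ∀ u : ℝ, esM π (esNxt K π A u)
        ≤ Real.sqrt (esP π (esNxt K π A u)) := fun u =>
      Real.sqrt_le_sqrt (min_le_left _ _)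
    have hIsq : IntegrableOn (fun u => Real.sqrt (esP π (esNxt K π A u)))
        (Set.Icc (0:ℝ) 1) volume :=
      es_integrable_on measurableSet_Icc hfin1 _ hφm.sqrt 1
        (fun u => by
          rw [abs_of_nonneg (Real.sqrt_nonneg _)]
          have := Real.sqrt_le_sqrt (hφ1 u)
          simpa using this)
    have h1 : (∫ u in Set.Icc (0:ℝ) 1, esM π (esNxt K π A u))
        ≤ ∫ u in Set.Icc (0:ℝ) 1, Real.sqrt (esP π (esNxt K π A u)) :=
      integral_mono hIm hIsq hmono
    have h2 := es_combine _ hφm hφ0 hφ1 (esP π A) (∑ y ∈ Aᶜ, esQ K π A y) hQv0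
      (by linarith) (Or.inl hlow) hfull (sInf (esCond K π)) hΦ0
      (fun hpos => esPhi_mul_le hKnonneg hπnonneg A hpos hA)
    have hMA : esM π A = Real.sqrt (esP π A) := by
      rw [esM]
      congr 1
      exact min_eq_left (by linarith)
    rw [hMA]
    linarith
  · push_neg at hA
    have hIφ : IntegrableOn (fun u => esP π (esNxt K π A u)) (Set.Icc (0:ℝ) 1) volume :=
      es_integrable_on measurableSet_Icc hfin1 _ hφm 1
        (fun u => abs_le.mpr ⟨by linarith [hφ0 u], hφ1 u⟩)
    have hψm : Measurable (fun u : ℝ => 1 - esP π (esNxt K π A u)) :=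
      measurable_const.sub hφm
    have hψ0 : ∀ u : ℝ, 0 ≤ 1 - esP π (esNxt K π A u) := fun u => by linarith [hφ1 u]
    have hψ1 : ∀ u : ℝ, 1 - esP π (esNxt K π A u) ≤ 1 := fun u => by linarith [hφ0 u]
    have hconst1 : (∫ _u in Set.Icc (0:ℝ) 1, (1:ℝ)) = 1 := by
      rw [setIntegral_const, measureReal_def, Real.volume_Icc, sub_zero, ENNReal.toReal_ofReal zero_le_one,
        smul_eq_mul, mul_one]
    have hconst2 : (∫ _u in Set.Icc (0:ℝ) (1/2), (1:ℝ)) = 1/2 := by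
      rw [setIntegral_const, measureReal_def, Real.volume_Icc, sub_zero,
        ENNReal.toReal_ofReal (by norm_num : (0:ℝ) ≤ 1/2), smul_eq_mul, mul_one]
    have hψfull : (∫ u in Set.Icc (0:ℝ) 1, (1 - esP π (esNxt K π A u))) = 1 - esP π A := by
      rw [integral_sub (integrableOn_const (C := (1:ℝ)) hfin1.ne) hIφ, hconst1, hfull]
    have hfin2 : volume (Set.Icc (0:ℝ) (1/2)) < ⊤ := by
      rw [Real.volume_Icc]; exact ENNReal.ofReal_lt_top
    have hψlow : (∫ u in Set.Icc (0:ℝ) (1/2), (1 - esP π (esNxt K π A u)))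
        = (1 - esP π A)/2 - ∑ y ∈ Aᶜ, esQ K π A y := by
      rw [integral_sub (integrableOn_const (C := (1:ℝ)) hfin2.ne)
        (hIφ.mono_set (Set.Icc_subset_Icc_right (by norm_num))), hconst2, hlow]
      ring
    have hQc : (∑ y ∈ Aᶜ, esQ K π A y) ≤ (1 - esP π A)/2 := by
      have h := esQv_le hKnonneg hKrow hlazy hπnonneg Aᶜ
      rw [compl_compl, esQv_compl hrev, esP_compl hπsum] at h
      exact h
    have hΦA : 0 < 1 - esP π A → sInf (esCond K π) * (1 - esP π A)
        ≤ ∑ y ∈ Aᶜ, esQ K π A y := by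
      intro hpos
      have h := esPhi_mul_le hKnonneg hπnonneg Aᶜ
        (by rw [esP_compl hπsum]; exact hpos)
        (by rw [esP_compl hπsum]; linarith)
      rw [compl_compl, esQv_compl hrev, esP_compl hπsum] at h
      exact h
    have hmono : ∀ u : ℝ, esM π (esNxt K π A u)
        ≤ Real.sqrt (1 - esP π (esNxt K π A u)) := fun u =>
      Real.sqrt_le_sqrt (min_le_right _ _)
    have hIsq : IntegrableOn (fun u => Real.sqrt (1 - esP π (esNxt K π A u)))
        (Set.Icc (0:ℝ) 1) volume :=
      es_integrable_on measurableSet_Icc hfin1 _ hψm.sqrt 1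
        (fun u => by
          rw [abs_of_nonneg (Real.sqrt_nonneg _)]
          have := Real.sqrt_le_sqrt (hψ1 u)
          simpa using this)
    have h1 : (∫ u in Set.Icc (0:ℝ) 1, esM π (esNxt K π A u))
        ≤ ∫ u in Set.Icc (0:ℝ) 1, Real.sqrt (1 - esP π (esNxt K π A u)) :=
      integral_mono hIm hIsq hmono
    have h2 := es_combine _ hψm hψ0 hψ1 (1 - esP π A) (∑ y ∈ Aᶜ, esQ K π A y) hQv0
      (by linarith) (Or.inr hψlow) hψfull (sInf (esCond K π)) hΦ0 hΦA
    have hMA : esM π A = Real.sqrt (1 - esP π A) := by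
      rw [esM]
      congr 1
      exact min_eq_right (by linarith)
    rw [hMA]
    linarith

end EvolvingSets

/-- Decay estimate for the evolving set process of a `1/2`-lazy reversible chain with
conductance `Φ`: with `M_t = S_t` if `π(S_t) ≤ 1/2` and `M_t = S_tᶜ` otherwise,
`P[π(M_t) ≥ a] ≤ (1 − Φ²/2)^t √(min(π(S₀), 1−π(S₀))/a)` for all `a > 0`. -/
theorem evolving_set_decay
    {E Ω : Type*} [MeasurableSpace E] [Fintype Ω] [DecidableEq Ω]
    (P : Measure E) [IsProbabilityMeasure P]
    (K : Ω → Ω → ℝ) (π : Ω → ℝ)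
    (hKnonneg : ∀ x y, 0 ≤ K x y) (hKrow : ∀ x, ∑ y, K x y = 1)
    (hlazy : ∀ x, 1/2 ≤ K x x)
    (hrev : ∀ x y, π x * K x y = π y * K y x)
    (hπnonneg : ∀ x, 0 ≤ π x) (hπsum : ∑ x, π x = 1)
    (U : ℕ → E → ℝ) (hUmeas : ∀ t, Measurable (U t))
    (hUunif : ∀ t, P.map (U t) = (volume : Measure ℝ).restrict (Set.Icc 0 1))
    (hUindep : iIndepFun U P)
    (S : ℕ → E → Finset Ω) (S₀ : Finset Ω)
    (hS0 : ∀ ω, S 0 ω = S₀)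
    (hSrec : ∀ t ω, S (t+1) ω
      = univ.filter (fun y => U (t+1) ω * π y ≤ ∑ x ∈ S t ω, π x * K x y))
    -- the conductance
    (Φ : ℝ)
    (hΦ : Φ = sInf {r : ℝ | ∃ A : Finset Ω,
      0 < ∑ x ∈ A, π x ∧ (∑ x ∈ A, π x) ≤ 1/2 ∧
      r = (∑ x ∈ A, ∑ y ∈ Aᶜ, π x * K x y) / ∑ x ∈ A, π x})
    -- the complemented process
    (M : ℕ → E → Finset Ω)
    (hM : ∀ t ω, M t ω = if (∑ x ∈ S t ω, π x) ≤ 1/2 then S t ω else (S t ω)ᶜ) :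
    ∀ (a : ℝ), 0 < a → ∀ t : ℕ,
      (P {ω | a ≤ ∑ x ∈ M t ω, π x}).toReal
        ≤ (1 - Φ^2/2)^t
          * Real.sqrt (min (∑ x ∈ S₀, π x) (1 - ∑ x ∈ S₀, π x) / a) := by
  intro a ha t
  have hΦ' : Φ = sInf (esCond K π) := hΦ
  have hΦ0 : 0 ≤ Φ := hΦ' ▸ esPhi_nonneg hKnonneg hπnonneg
  have hΦh : Φ ≤ 1/2 := hΦ' ▸ esPhi_le_half hKnonneg hKrow hlazy hπnonneg
  have hc0 : 0 ≤ 1 - Φ^2/2 := by nlinarith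
  have hcore : ∀ A : Finset Ω, (∫ u in Set.Icc (0:ℝ) 1, esM π (esNxt K π A u))
      ≤ (1 - Φ^2/2) * esM π A := fun A => by
    rw [hΦ']
    exact es_core hKnonneg hKrow hlazy hrev hπnonneg hπsum A
  -- representation of S t as a function of U's
  have hrep : ∀ t : ℕ, ∀ ω, S t ω = esG K π S₀ t (fun i : Fin t => U ((i : ℕ)+1) ω) := by
    intro t
    induction t with
    | zero => intro ω; rw [hS0]; rfl
    | succ t ih =>
      intro ω
      rw [hSrec t ω]
      show esNxt K π (S t ω) (U (t+1) ω) = _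
      rw [ih ω]
      simp only [esG, Fin.coe_castSucc, Fin.val_last]
  have hSmeas : ∀ t : ℕ, Measurable (S t) := by
    intro t
    have he : S t = fun ω => esG K π S₀ t (fun i : Fin t => U ((i : ℕ)+1) ω) :=
      funext (hrep t)
    rw [he]
    exact (esG_measurable S₀ t).comp (measurable_pi_lambda _ fun i => hUmeas _)
  -- independence of functions of S t and U (t+1)
  have hindep : ∀ (t : ℕ) (f : Finset Ω → ℝ) (g : ℝ → ℝ), Measurable g →
      IndepFun (fun ω => f (S t ω)) (fun ω => g (U (t+1) ω)) P := by
    intro t f g hg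
    set T1 : Finset ℕ := Finset.image (fun i : Fin t => (i:ℕ)+1) Finset.univ with hT1
    have hmem : ∀ i : Fin t, (i:ℕ)+1 ∈ T1 := fun i =>
      Finset.mem_image_of_mem _ (Finset.mem_univ i)
    have hdisj : Disjoint T1 ({t+1} : Finset ℕ) := by
      rw [Finset.disjoint_left]
      intro x hx hx'
      rw [hT1] at hx
      simp only [Finset.mem_image, Finset.mem_univ, true_and] at hx
      obtain ⟨i, _, rfl⟩ := hx
      rw [Finset.mem_singleton] at hx'
      have := i.isLt
      omega
    have base := hUindep.indepFun_finset T1 {t+1} hdisj hUmeas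
    set φf : ({x // x ∈ T1} → ℝ) → ℝ :=
      fun v => f (esG K π S₀ t (fun i : Fin t => v ⟨(i:ℕ)+1, hmem i⟩)) with hφdef
    have hφ : Measurable φf := (es_meas_from_finset f).comp
      ((esG_measurable S₀ t).comp (measurable_pi_lambda _ fun i => measurable_pi_apply _))
    set ψf : ({x // x ∈ ({t+1} : Finset ℕ)} → ℝ) → ℝ :=
      fun v => g (v ⟨t+1, Finset.mem_singleton_self _⟩) with hψdef
    have hψ : Measurable ψf := hg.comp (measurable_pi_apply _)
    have hcomp := base.comp hφ hψ
    have e1 : (fun ω => f (S t ω)) = φf ∘ (fun ω (i : {x // x ∈ T1}) => U i ω) := by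
      funext ω
      simp only [Function.comp_apply, hφdef]
      rw [hrep t ω]
    have e2 : (fun ω => g (U (t+1) ω))
        = ψf ∘ (fun ω (i : {x // x ∈ ({t+1} : Finset ℕ)}) => U i ω) := rfl
    rw [e1, e2]
    exact hcomp
  -- integrability helper
  have hbint : ∀ (f : E → ℝ), Measurable f → (∀ ω, |f ω| ≤ 1) → Integrable f P :=
    fun f hf hb => (integrable_const (1:ℝ)).mono' hf.aestronglyMeasurable
      (Filter.Eventually.of_forall fun ω => by rw [Real.norm_eq_abs]; exact hb ω)
  -- one step bound
  have hstep : ∀ t : ℕ, (∫ ω, esM π (S (t+1) ω) ∂P)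
      ≤ (1 - Φ^2/2) * ∫ ω, esM π (S t ω) ∂P := by
    intro t
    have hre : ∀ ω, esM π (S (t+1) ω)
        = ∑ A : Finset Ω, (if S t ω = A then (1:ℝ) else 0)
            * esM π (esNxt K π A (U (t+1) ω)) := by
      intro ω
      have h1 : S (t+1) ω = esNxt K π (S t ω) (U (t+1) ω) := hSrec t ω
      rw [h1]
      rw [show ∑ A : Finset Ω, (if S t ω = A then (1:ℝ) else 0)
            * esM π (esNxt K π A (U (t+1) ω))
          = ∑ A : Finset Ω, (if S t ω = A
              then esM π (esNxt K π A (U (t+1) ω)) else 0) from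
        Finset.sum_congr rfl fun A _ => by split_ifs <;> simp]
      rw [Finset.sum_ite_eq]
      simp
    have hFmeas : ∀ A : Finset Ω, Measurable (fun ω => if S t ω = A then (1:ℝ) else 0) :=
      fun A => (es_meas_from_finset (fun B : Finset Ω => if B = A then (1:ℝ) else 0)).comp
        (hSmeas t)
    have hGmeas : ∀ A : Finset Ω,
        Measurable (fun ω => esM π (esNxt K π A (U (t+1) ω))) := fun A =>
      ((es_meas_from_finset (esM π)).comp (esNxt_measurable A)).comp (hUmeas (t+1))
    have hFbd : ∀ A : Finset Ω, ∀ ω, |if S t ω = A then (1:ℝ) else 0| ≤ 1 := fun A ω => by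
      split_ifs <;> simp
    have hGbd : ∀ A : Finset Ω, ∀ ω, |esM π (esNxt K π A (U (t+1) ω))| ≤ 1 := fun A ω => by
      rw [abs_of_nonneg (esM_nonneg _)]
      exact esM_le_one hπnonneg hπsum _
    have hFG : ∀ A : Finset Ω, Integrable
        (fun ω => (if S t ω = A then (1:ℝ) else 0)
          * esM π (esNxt K π A (U (t+1) ω))) P := fun A =>
      hbint _ ((hFmeas A).mul (hGmeas A)) fun ω => by
        rw [abs_mul]
        exact mul_le_one₀ (hFbd A ω) (abs_nonneg _) (hGbd A ω)
    have hsplit : (∫ ω, esM π (S (t+1) ω) ∂P)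
        = ∑ A : Finset Ω, ∫ ω, (if S t ω = A then (1:ℝ) else 0)
            * esM π (esNxt K π A (U (t+1) ω)) ∂P := by
      rw [show (fun ω => esM π (S (t+1) ω)) = fun ω => ∑ A : Finset Ω,
          (if S t ω = A then (1:ℝ) else 0) * esM π (esNxt K π A (U (t+1) ω)) from
        funext hre]
      exact integral_finset_sum _ fun A _ => hFG A
    have hprod : ∀ A : Finset Ω, (∫ ω, (if S t ω = A then (1:ℝ) else 0)
          * esM π (esNxt K π A (U (t+1) ω)) ∂P)
        = (∫ ω, (if S t ω = A then (1:ℝ) else 0) ∂P)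
          * ∫ ω, esM π (esNxt K π A (U (t+1) ω)) ∂P := by
      intro A
      have hi := hindep t (fun B : Finset Ω => if B = A then (1:ℝ) else 0)
        (fun u => esM π (esNxt K π A u))
        ((es_meas_from_finset (esM π)).comp (esNxt_measurable A))
      exact hi.integral_mul_eq_mul_integral
        (hbint _ (hFmeas A) (hFbd A)).aestronglyMeasurable (hbint _ (hGmeas A) (hGbd A)).aestronglyMeasurable
    have hmap : ∀ A : Finset Ω, (∫ ω, esM π (esNxt K π A (U (t+1) ω)) ∂P)
        = ∫ u in Set.Icc (0:ℝ) 1, esM π (esNxt K π A u) := by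
      intro A
      have hgm : Measurable (fun u : ℝ => esM π (esNxt K π A u)) :=
        (es_meas_from_finset (esM π)).comp (esNxt_measurable A)
      have h := integral_map (μ := P) (φ := U (t+1)) (hUmeas (t+1)).aemeasurable
        (f := fun u => esM π (esNxt K π A u))
        (hgm.aestronglyMeasurable)
      rw [hUunif (t+1)] at h
      exact h.symm
    have hF0 : ∀ A : Finset Ω, 0 ≤ ∫ ω, (if S t ω = A then (1:ℝ) else 0) ∂P := fun A =>
      integral_nonneg fun ω => by split_ifs <;> norm_num
    have hbd : ∀ A : Finset Ω, (∫ ω, (if S t ω = A then (1:ℝ) else 0)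
          * esM π (esNxt K π A (U (t+1) ω)) ∂P)
        ≤ (∫ ω, (if S t ω = A then (1:ℝ) else 0) ∂P) * ((1 - Φ^2/2) * esM π A) := by
      intro A
      rw [hprod A]
      apply mul_le_mul_of_nonneg_left _ (hF0 A)
      rw [hmap A]
      exact hcore A
    have hrev2 : (∫ ω, esM π (S t ω) ∂P)
        = ∑ A : Finset Ω, (∫ ω, (if S t ω = A then (1:ℝ) else 0) ∂P) * esM π A := by
      have hre2 : ∀ ω, esM π (S t ω)
          = ∑ A : Finset Ω, (if S t ω = A then (1:ℝ) else 0) * esM π A := by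
        intro ω
        rw [show ∑ A : Finset Ω, (if S t ω = A then (1:ℝ) else 0) * esM π A
            = ∑ A : Finset Ω, (if S t ω = A then esM π A else 0) from
          Finset.sum_congr rfl fun A _ => by split_ifs <;> simp]
        rw [Finset.sum_ite_eq]
        simp
      rw [show (fun ω => esM π (S t ω)) = fun ω => ∑ A : Finset Ω,
          (if S t ω = A then (1:ℝ) else 0) * esM π A from funext hre2]
      rw [integral_finset_sum _ fun A _ => by
        exact (hbint _ (hFmeas A) (hFbd A)).mul_const (esM π A)]
      exact Finset.sum_congr rfl fun A _ => integral_mul_const _ _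
    calc (∫ ω, esM π (S (t+1) ω) ∂P)
        = ∑ A : Finset Ω, ∫ ω, (if S t ω = A then (1:ℝ) else 0)
            * esM π (esNxt K π A (U (t+1) ω)) ∂P := hsplit
    _ ≤ ∑ A : Finset Ω, (∫ ω, (if S t ω = A then (1:ℝ) else 0) ∂P)
          * ((1 - Φ^2/2) * esM π A) := Finset.sum_le_sum fun A _ => hbd A
    _ = (1 - Φ^2/2) * ∑ A : Finset Ω,
          (∫ ω, (if S t ω = A then (1:ℝ) else 0) ∂P) * esM π A := by
        rw [Finset.mul_sum]
        exact Finset.sum_congr rfl fun A _ => by ring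
    _ = (1 - Φ^2/2) * ∫ ω, esM π (S t ω) ∂P := by rw [hrev2]
  -- iterate
  have hiter : ∀ t : ℕ, (∫ ω, esM π (S t ω) ∂P) ≤ (1 - Φ^2/2)^t * esM π S₀ := by
    intro t
    induction t with
    | zero =>
      rw [pow_zero, one_mul]
      rw [show (fun ω => esM π (S 0 ω)) = fun _ => esM π S₀ from
        funext fun ω => by rw [hS0]]
      rw [integral_const]
      simp
    | succ t ih =>
      calc (∫ ω, esM π (S (t+1) ω) ∂P) ≤ (1 - Φ^2/2) * ∫ ω, esM π (S t ω) ∂P := hstep t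
      _ ≤ (1 - Φ^2/2) * ((1 - Φ^2/2)^t * esM π S₀) := mul_le_mul_of_nonneg_left ih hc0
      _ = (1 - Φ^2/2)^(t+1) * esM π S₀ := by ring
  -- the M-identity
  have hM_eq : ∀ ω, esP π (M t ω) = min (esP π (S t ω)) (1 - esP π (S t ω)) := by
    intro ω
    rw [hM t ω]
    split_ifs with h
    · have hh : esP π (S t ω) ≤ 1/2 := h
      exact (min_eq_left (by linarith)).symm
    · push_neg at h
      have hh : 1/2 < esP π (S t ω) := h
      rw [esP_compl hπsum]
      exact (min_eq_right (by linarith)).symm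
  -- measurability of the event
  have hMmeas : Measurable (M t) := by
    rw [show M t = (fun B : Finset Ω => if esP π B ≤ 1/2 then B else Bᶜ) ∘ (S t) from
      funext fun ω => by rw [hM t ω]; rfl]
    exact (es_meas_from_finset _).comp (hSmeas t)
  have hEv : MeasurableSet {ω | a ≤ esP π (M t ω)} :=
    measurableSet_le measurable_const ((es_meas_from_finset (esP π)).comp hMmeas)
  -- Markov
  have hmark : (P {ω | a ≤ esP π (M t ω)}).toReal * Real.sqrt a
      ≤ ∫ ω, esM π (S t ω) ∂P := by
    have hind : ∀ ω, Set.indicator {ω | a ≤ esP π (M t ω)} (fun _ => Real.sqrt a) ω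
        ≤ esM π (S t ω) := by
      intro ω
      rw [Set.indicator_apply]
      split_ifs with h
      · have ha2 : a ≤ min (esP π (S t ω)) (1 - esP π (S t ω)) := by
          rw [← hM_eq ω]; exact h
        exact Real.sqrt_le_sqrt ha2
      · exact esM_nonneg _
    have h1 : (∫ ω, Set.indicator {ω | a ≤ esP π (M t ω)} (fun _ => Real.sqrt a) ω ∂P)
        ≤ ∫ ω, esM π (S t ω) ∂P :=
      integral_mono ((integrable_const _).indicator hEv)
        (hbint _ ((es_meas_from_finset (esM π)).comp (hSmeas t))
          (fun ω => by
            rw [abs_of_nonneg (esM_nonneg _)]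
            exact esM_le_one hπnonneg hπsum _)) hind
    rw [integral_indicator_const _ hEv, smul_eq_mul] at h1
    exact h1
  -- conclude
  have hmin0 : 0 ≤ min (esP π S₀) (1 - esP π S₀) :=
    le_min (esP_nonneg hπnonneg S₀) (by linarith [esP_le_one hπnonneg hπsum S₀])
  show (P {ω | a ≤ esP π (M t ω)}).toReal
      ≤ (1 - Φ^2/2)^t * Real.sqrt (min (esP π S₀) (1 - esP π S₀) / a)
  rw [Real.sqrt_div hmin0 a, ← mul_div_assoc, le_div_iff₀ (Real.sqrt_pos.mpr ha)]
  calc (P {ω | a ≤ esP π (M t ω)}).toReal * Real.sqrt a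
      ≤ ∫ ω, esM π (S t ω) ∂P := hmark
  _ ≤ (1 - Φ^2/2)^t * esM π S₀ := hiter t
  _ = (1 - Φ^2/2)^t * Real.sqrt (min (esP π S₀) (1 - esP π S₀)) := rfl
end

section
/- Let {S_t} be the evolving set process for a kernel K on a finite state space Ω with stationary distribution π, and let τ = min{t ≥ 0 : S_t ∈ {∅,Ω}} be almost surely finite. Then for every t ≥ 0, every S with π(S) > 0, and every y ∈ Ω: |K^t(S,y) − π(y)| ≤ (π(y)/π(S)) · P_{S_0=S}[τ > t]. -/
open MeasureTheory ProbabilityTheory Finset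

private lemma indep_mono_aux {E : Type*} {mE : MeasurableSpace E} {μ : Measure E}
    {m1 m2 m3 m4 : MeasurableSpace E} (h : Indep m1 m2 μ) (h3 : m3 ≤ m1) (h4 : m4 ≤ m2) :
    Indep m3 m4 μ := by
  rw [Indep_iff] at h ⊢
  intro t1 t2 h1 h2
  exact h t1 t2 (h3 _ h1) (h4 _ h2)

/-- Convergence bound via the evolving set process: with `τ` the (a.s. finite)
hitting time of the absorbing states `∅`, `Ω`, for every `t`, every starting set `S₀`
with `π(S₀) > 0` and every `y`,
`|K^t(S₀,y) − π(y)| ≤ (π(y)/π(S₀)) · P[τ > t]`. -/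
theorem evolving_set_convergence_bound
    {E Ω : Type*} [MeasurableSpace E] [Fintype Ω] [DecidableEq Ω]
    (P : Measure E) [IsProbabilityMeasure P]
    (K : Ω → Ω → ℝ) (π : Ω → ℝ)
    (hKnonneg : ∀ x y, 0 ≤ K x y) (hKrow : ∀ x, ∑ y, K x y = 1)
    (hπnonneg : ∀ x, 0 ≤ π x) (hπsum : ∑ x, π x = 1)
    (hstat : ∀ y, ∑ x, π x * K x y = π y)
    (U : ℕ → E → ℝ) (hUmeas : ∀ t, Measurable (U t))
    (hUunif : ∀ t, P.map (U t) = (volume : Measure ℝ).restrict (Set.Icc 0 1))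
    (hUindep : iIndepFun U P)
    (S : ℕ → E → Finset Ω) (S₀ : Finset Ω)
    (hS0 : ∀ ω, S 0 ω = S₀)
    (hSrec : ∀ t ω, S (t+1) ω
      = univ.filter (fun y => U (t+1) ω * π y ≤ ∑ x ∈ S t ω, π x * K x y))
    (hSmeas : ∀ t, @Measurable E (Finset Ω) _ ⊤ (S t))
    (hπS0 : 0 < ∑ x ∈ S₀, π x)
    (Kpow : ℕ → Ω → Ω → ℝ)
    (hKpow0 : ∀ x y, Kpow 0 x y = if x = y then 1 else 0)
    (hKpowS : ∀ t x y, Kpow (t+1) x y = ∑ z, K x z * Kpow t z y)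
    (τ : E → ℕ)
    (hτhit : ∀ᵐ ω ∂P, S (τ ω) ω = ∅ ∨ S (τ ω) ω = Finset.univ)
    (hτmin : ∀ᵐ ω ∂P, ∀ t : ℕ, (S t ω = ∅ ∨ S t ω = Finset.univ) → τ ω ≤ t) :
    ∀ (t : ℕ) (y : Ω),
      |(∑ x ∈ S₀, π x * Kpow t x y) / (∑ x ∈ S₀, π x) - π y|
        ≤ π y / (∑ x ∈ S₀, π x) * (P {ω | t < τ ω}).toReal := by
  classical
  letI : MeasurableSpace (Finset Ω) := ⊤
  -- basic facts about Kpow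
  have hKpnn : ∀ t x y, 0 ≤ Kpow t x y := by
    intro t
    induction t with
    | zero => intro x y; rw [hKpow0]; split <;> norm_num
    | succ t ih =>
      intro x y; rw [hKpowS]
      exact Finset.sum_nonneg fun z _ => mul_nonneg (hKnonneg x z) (ih z y)
  have hKprow : ∀ t x, ∑ y, Kpow t x y = 1 := by
    intro t
    induction t with
    | zero => intro x; simp [hKpow0]
    | succ t ih =>
      intro x
      simp only [hKpowS]
      rw [Finset.sum_comm]
      simp [← Finset.mul_sum, ih, hKrow]
  have hKpstat : ∀ t y, ∑ x, π x * Kpow t x y = π y := by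
    intro t
    induction t with
    | zero => intro y; simp [hKpow0, mul_ite]
    | succ t ih =>
      intro y
      have h1 : ∑ x, π x * Kpow (t+1) x y = ∑ z, (∑ x, π x * K x z) * Kpow t z y := by
        simp only [hKpowS, Finset.mul_sum, Finset.sum_mul]
        rw [Finset.sum_comm]
        exact Finset.sum_congr rfl fun z _ => Finset.sum_congr rfl fun x _ => by ring
      rw [h1]
      simp only [hstat]
      exact ih y
  have hKpcomm : ∀ t x y, ∑ z, Kpow t x z * K z y = Kpow (t+1) x y := by
    intro t
    induction t with
    | zero =>
      intro x y
      rw [hKpowS]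
      simp [hKpow0, ite_mul, mul_ite]
    | succ t ih =>
      intro x y
      have h1 : ∑ z, Kpow (t+1) x z * K z y = ∑ w, K x w * (∑ z, Kpow t w z * K z y) := by
        simp only [hKpowS, Finset.sum_mul, Finset.mul_sum]
        rw [Finset.sum_comm]
        exact Finset.sum_congr rfl fun w _ => Finset.sum_congr rfl fun z _ => by ring
      rw [h1]
      simp only [ih]
      exact (hKpowS (t+1) x y).symm
  -- σ-algebras generated by the uniforms
  set m : ℕ → MeasurableSpace E := fun i => MeasurableSpace.comap (U i) inferInstance with hmdef
  have hm_le : ∀ i, m i ≤ ‹MeasurableSpace E› := fun i => (hUmeas i).comap_le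
  have hiI : iIndep m P := (iIndepFun_iff_iIndep _ _ _).1 hUindep
  set M : ℕ → MeasurableSpace E := fun t => ⨆ i ∈ Set.Iic t, m i with hMdef
  have hM_le : ∀ t, M t ≤ ‹MeasurableSpace E› := fun t => iSup₂_le fun i _ => hm_le i
  have hmM : ∀ i t, i ≤ t → m i ≤ M t := fun i t hit =>
    le_biSup m (show i ∈ Set.Iic t from hit)
  have hMmono : ∀ t, M t ≤ M (t+1) := by
    intro t
    refine iSup₂_le fun i hi => hmM i (t+1) (le_trans hi (Nat.le_succ t))
  have hSM : ∀ t, Measurable[M t] (S t) := by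
    intro t
    induction t with
    | zero =>
      have h : S 0 = fun _ => S₀ := funext hS0
      rw [h]
      exact measurable_const
    | succ t ih =>
      have hU' : Measurable[M (t+1)] (U (t+1)) :=
        Measurable.of_comap_le (hmM (t+1) (t+1) le_rfl)
      have hS' : Measurable[M (t+1)] (S t) := ih.mono (hMmono t) le_rfl
      have hg : ∀ y, Measurable[M (t+1)] (fun ω => ∑ x ∈ S t ω, π x * K x y) := by
        intro y
        exact (measurable_from_top (f := fun A : Finset Ω => ∑ x ∈ A, π x * K x y)).comp hS'
      refine @measurable_to_countable' (Finset Ω) E _ _ (M (t+1)) (S (t+1)) ?_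
      intro B
      have hset : S (t+1) ⁻¹' {B} =
          ⋂ y : Ω, {ω | (U (t+1) ω * π y ≤ ∑ x ∈ S t ω, π x * K x y) ↔ y ∈ B} := by
        ext ω
        simp only [Set.mem_preimage, Set.mem_singleton_iff, hSrec, Finset.ext_iff,
          Finset.mem_filter, Finset.mem_univ, true_and, Set.mem_iInter, Set.mem_setOf_eq]
      rw [hset]
      refine MeasurableSet.iInter fun y => ?_
      by_cases hyB : y ∈ B
      · simp only [hyB, iff_true]
        exact measurableSet_le (hU'.mul_const _) (hg y)
      · simp only [hyB, iff_false]
        exact (measurableSet_le (hU'.mul_const _) (hg y)).compl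
  have hindep : ∀ t, IndepFun (U (t+1)) (S t) P := by
    intro t
    have h1 : Indep (M t) (m (t+1)) P := by
      have hdisj : Disjoint (Set.Iic t) ({t+1} : Set ℕ) := by
        rw [Set.disjoint_singleton_right]
        simp
      have := indep_iSup_of_disjoint hm_le hiI hdisj
      simpa [hMdef] using this
    rw [IndepFun_iff_Indep]
    exact (indep_mono_aux h1 (hSM t).comap_le le_rfl).symm
  -- probability of a uniform being below a level
  have hUIic : ∀ (s : ℕ) (r : ℝ), 0 ≤ r → r ≤ 1 →
      P (U s ⁻¹' Set.Iic r) = ENNReal.ofReal r := by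
    intro s r h0 h1
    rw [← Measure.map_apply (hUmeas s) measurableSet_Iic, hUunif s,
      Measure.restrict_apply measurableSet_Iic]
    have h2 : Set.Iic r ∩ Set.Icc 0 1 = Set.Icc 0 r := by
      ext u
      simp only [Set.mem_inter_iff, Set.mem_Iic, Set.mem_Icc]
      constructor
      · rintro ⟨h3, h4, h5⟩; exact ⟨h4, h3⟩
      · rintro ⟨h3, h4⟩; exact ⟨h4, h3, le_trans h4 h1⟩
    rw [h2, Real.volume_Icc]
    norm_num
  -- partition along the values of S t
  have hpart : ∀ (t : ℕ) (Es : Set E), MeasurableSet Es →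
      P Es = ∑ A : Finset Ω, P (Es ∩ S t ⁻¹' {A}) := by
    intro t Es hE
    have hy : Es = ⋃ A ∈ (Finset.univ : Finset (Finset Ω)), (Es ∩ S t ⁻¹' {A}) := by
      ext ω
      simp
    conv_lhs => rw [hy]
    rw [measure_biUnion_finset]
    · intro A _ B _ hAB
      rw [Function.onFun, Set.disjoint_left]
      rintro ω ⟨-, hA⟩ ⟨-, hB⟩
      exact hAB ((Set.mem_singleton_iff.1 hA).symm.trans (Set.mem_singleton_iff.1 hB))
    · intro A _
      exact hE.inter (hSmeas t trivial)
  have hSmeasSet : ∀ (t : ℕ) (y : Ω), MeasurableSet {ω | y ∈ S t ω} := by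
    intro t y
    exact hSmeas t (show MeasurableSet[⊤] {A : Finset Ω | y ∈ A} from trivial)
  -- Lemma A : π y · P[y ∈ S_t] = ∑_{x ∈ S₀} π x K^t(x,y)
  have lemA : ∀ (t : ℕ) (y : Ω),
      π y * (P {ω | y ∈ S t ω}).toReal = ∑ x ∈ S₀, π x * Kpow t x y := by
    intro t
    induction t with
    | zero =>
      intro y
      have hrhs : ∑ x ∈ S₀, π x * Kpow 0 x y = if y ∈ S₀ then π y else 0 := by
        simp only [hKpow0, mul_ite, mul_one, mul_zero]
        exact Finset.sum_ite_eq' S₀ y π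
      by_cases hy : y ∈ S₀
      · have h : {ω | y ∈ S 0 ω} = Set.univ := by
          ext ω; simp [hS0, hy]
        rw [h, hrhs]
        simp [hy]
      · have h : {ω | y ∈ S 0 ω} = ∅ := by
          ext ω; simp [hS0, hy]
        rw [h, hrhs]
        simp [hy]
    | succ t ih =>
      intro y
      have hev : {ω | y ∈ S (t+1) ω}
          = {ω | U (t+1) ω * π y ≤ ∑ x ∈ S t ω, π x * K x y} := by
        ext ω
        simp [hSrec]
      by_cases hπy : π y = 0
      · rw [hπy, zero_mul]
        have h1 : ∑ x ∈ S₀, π x * Kpow (t+1) x y ≤ ∑ x, π x * Kpow (t+1) x y :=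
          Finset.sum_le_sum_of_subset_of_nonneg (Finset.subset_univ _)
            (fun x _ _ => mul_nonneg (hπnonneg x) (hKpnn _ x y))
        have h2 : ∑ x, π x * Kpow (t+1) x y = 0 := by rw [hKpstat]; exact hπy
        have h3 : 0 ≤ ∑ x ∈ S₀, π x * Kpow (t+1) x y :=
          Finset.sum_nonneg fun x _ => mul_nonneg (hπnonneg x) (hKpnn _ x y)
        linarith
      · have hπy' : 0 < π y := lt_of_le_of_ne (hπnonneg y) (Ne.symm hπy)
        set g : Finset Ω → ℝ := fun A => ∑ x ∈ A, π x * K x y with hgdef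
        have hg0 : ∀ A, 0 ≤ g A :=
          fun A => Finset.sum_nonneg fun x _ => mul_nonneg (hπnonneg x) (hKnonneg x y)
        have hg1 : ∀ A, g A ≤ π y := by
          intro A
          calc g A ≤ ∑ x, π x * K x y :=
              Finset.sum_le_sum_of_subset_of_nonneg (Finset.subset_univ _)
                (fun x _ _ => mul_nonneg (hπnonneg x) (hKnonneg x y))
            _ = π y := hstat y
        have hEvMeas : MeasurableSet {ω | U (t+1) ω * π y ≤ g (S t ω)} :=
          measurableSet_le ((hUmeas (t+1)).mul_const _)
            ((measurable_from_top (f := g)).comp (hSmeas t))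
        have hpiece : ∀ A : Finset Ω,
            {ω | U (t+1) ω * π y ≤ g (S t ω)} ∩ S t ⁻¹' {A}
              = U (t+1) ⁻¹' Set.Iic (g A / π y) ∩ S t ⁻¹' {A} := by
          intro A
          ext ω
          simp only [Set.mem_inter_iff, Set.mem_setOf_eq, Set.mem_preimage,
            Set.mem_singleton_iff, Set.mem_Iic]
          constructor
          · rintro ⟨h1, h2⟩
            refine ⟨?_, h2⟩
            rw [le_div_iff₀ hπy']
            rw [h2] at h1
            exact h1
          · rintro ⟨h1, h2⟩
            rw [le_div_iff₀ hπy'] at h1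
            rw [h2]
            exact ⟨h1, rfl⟩
        have hprob : ∀ A : Finset Ω,
            P (U (t+1) ⁻¹' Set.Iic (g A / π y) ∩ S t ⁻¹' {A})
              = ENNReal.ofReal (g A / π y) * P (S t ⁻¹' {A}) := by
          intro A
          rw [(indepFun_iff_measure_inter_preimage_eq_mul.1 (hindep t)) _ _
            measurableSet_Iic trivial]
          rw [hUIic (t+1) _ (div_nonneg (hg0 A) (le_of_lt hπy'))
            ((div_le_one hπy').2 (hg1 A))]
        have hdecomp : (P {ω | y ∈ S (t+1) ω}).toReal
            = ∑ A : Finset Ω, (g A / π y) * (P (S t ⁻¹' {A})).toReal := by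
          rw [hev]
          rw [hpart t _ hEvMeas]
          rw [ENNReal.toReal_sum (fun A _ => measure_ne_top P _)]
          refine Finset.sum_congr rfl fun A _ => ?_
          rw [hpiece A, hprob A, ENNReal.toReal_mul,
            ENNReal.toReal_ofReal (div_nonneg (hg0 A) (le_of_lt hπy'))]
        rw [hdecomp]
        rw [Finset.mul_sum]
        have hstep1 : ∀ A : Finset Ω, π y * (g A / π y * (P (S t ⁻¹' {A})).toReal)
            = g A * (P (S t ⁻¹' {A})).toReal := by
          intro A
          field_simp
        rw [Finset.sum_congr rfl fun A _ => hstep1 A]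
        -- now ∑_A g A · P[S_t = A] = ∑_x π x K x y · P[x ∈ S_t]
        have hfiber : ∀ x : Ω, (P {ω | x ∈ S t ω}).toReal
            = ∑ A ∈ Finset.univ.filter (fun A : Finset Ω => x ∈ A),
                (P (S t ⁻¹' {A})).toReal := by
          intro x
          rw [hpart t _ (hSmeasSet t x), ENNReal.toReal_sum (fun A _ => measure_ne_top P _)]
          rw [Finset.sum_filter]
          refine Finset.sum_congr rfl fun A _ => ?_
          by_cases hxA : x ∈ A
          · have : {ω | x ∈ S t ω} ∩ S t ⁻¹' {A} = S t ⁻¹' {A} := by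
              ext ω
              simp only [Set.mem_inter_iff, Set.mem_setOf_eq, Set.mem_preimage,
                Set.mem_singleton_iff, and_iff_right_iff_imp]
              intro h; rw [h]; exact hxA
            rw [this]
            simp [hxA]
          · have : {ω | x ∈ S t ω} ∩ S t ⁻¹' {A} = ∅ := by
              ext ω
              simp only [Set.mem_inter_iff, Set.mem_setOf_eq, Set.mem_preimage,
                Set.mem_singleton_iff, Set.mem_empty_iff_false, iff_false, not_and]
              intro h1 h2
              rw [h2] at h1
              exact hxA h1
            rw [this]
            simp [hxA]
        have hsumswap : ∑ A : Finset Ω, g A * (P (S t ⁻¹' {A})).toReal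
            = ∑ x, (π x * K x y) * (P {ω | x ∈ S t ω}).toReal := by
          calc ∑ A : Finset Ω, g A * (P (S t ⁻¹' {A})).toReal
              = ∑ A : Finset Ω,
                  ∑ x, (if x ∈ A then (π x * K x y) * (P (S t ⁻¹' {A})).toReal else 0) := by
                refine Finset.sum_congr rfl fun A _ => ?_
                rw [Finset.sum_ite_mem, Finset.univ_inter, ← Finset.sum_mul]
            _ = ∑ x, ∑ A : Finset Ω,
                  (if x ∈ A then (π x * K x y) * (P (S t ⁻¹' {A})).toReal else 0) :=
                Finset.sum_comm
            _ = ∑ x, (π x * K x y) * (P {ω | x ∈ S t ω}).toReal := by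
                refine Finset.sum_congr rfl fun x _ => ?_
                rw [← Finset.sum_filter, ← Finset.mul_sum, ← hfiber x]
        rw [hsumswap]
        have hfinal : ∀ x : Ω, (π x * K x y) * (P {ω | x ∈ S t ω}).toReal
            = K x y * (π x * (P {ω | x ∈ S t ω}).toReal) := fun x => by ring
        rw [Finset.sum_congr rfl fun x _ => hfinal x]
        simp only [ih]
        calc ∑ x, K x y * ∑ z ∈ S₀, π z * Kpow t z x
            = ∑ x, ∑ z ∈ S₀, π z * (Kpow t z x * K x y) := by
              refine Finset.sum_congr rfl fun x _ => ?_
              rw [Finset.mul_sum]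
              exact Finset.sum_congr rfl fun z _ => by ring
          _ = ∑ z ∈ S₀, ∑ x, π z * (Kpow t z x * K x y) := Finset.sum_comm
          _ = ∑ z ∈ S₀, π z * Kpow (t+1) z y := by
              refine Finset.sum_congr rfl fun z _ => ?_
              rw [← Finset.mul_sum, hKpcomm t z y]
  -- Lemma B : the martingale property ∑_z π z P[z ∈ S_t] = π(S₀)
  have lemB : ∀ t : ℕ, ∑ z, π z * (P {ω | z ∈ S t ω}).toReal = ∑ x ∈ S₀, π x := by
    intro t
    simp only [lemA t]
    rw [Finset.sum_comm]
    refine Finset.sum_congr rfl fun x _ => ?_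
    rw [← Finset.mul_sum, hKprow t x, mul_one]
  -- the uniforms are a.s. in (0,1]
  have hUae : ∀ᵐ ω ∂P, ∀ s : ℕ, U s ω ∈ Set.Ioc (0:ℝ) 1 := by
    rw [MeasureTheory.ae_all_iff]
    intro s
    have h1 : P (U s ⁻¹' Set.Ioc 0 1) = 1 := by
      rw [← Measure.map_apply (hUmeas s) measurableSet_Ioc, hUunif s,
        Measure.restrict_apply measurableSet_Ioc]
      have h2 : Set.Ioc (0:ℝ) 1 ∩ Set.Icc 0 1 = Set.Ioc 0 1 := by
        rw [Set.inter_eq_left]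
        exact Set.Ioc_subset_Icc_self
      rw [h2, Real.volume_Ioc]
      norm_num
    rw [ae_iff]
    have hc : {ω | ¬ U s ω ∈ Set.Ioc (0:ℝ) 1} = (U s ⁻¹' Set.Ioc 0 1)ᶜ := rfl
    rw [hc, measure_compl (hUmeas s measurableSet_Ioc) (measure_ne_top P _), h1, measure_univ]
    simp
  -- a.s., after time τ the set is either π-null or everything
  have habs : ∀ᵐ ω ∂P, ∀ t : ℕ, τ ω ≤ t →
      ((∀ x ∈ S t ω, π x = 0) ∨ S t ω = Finset.univ) := by
    filter_upwards [hτhit, hUae] with ω hhit hU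
    intro t ht
    induction t, ht using Nat.le_induction with
    | base =>
      rcases hhit with h | h
      · left; intro x hx; rw [h] at hx; exact absurd hx (Finset.notMem_empty x)
      · right; exact h
    | succ t ht ih =>
      rcases ih with h | h
      · left
        intro x hx
        rw [hSrec t ω, Finset.mem_filter] at hx
        have hsum : ∑ z ∈ S t ω, π z * K z x = 0 :=
          Finset.sum_eq_zero fun z hz => by rw [h z hz, zero_mul]
        have h2 := hx.2
        rw [hsum] at h2
        have hU1 := (hU (t+1)).1
        by_contra h4
        have h5 : 0 < π x := lt_of_le_of_ne (hπnonneg x) (Ne.symm h4)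
        nlinarith [mul_pos hU1 h5]
      · right
        refine Finset.eq_univ_iff_forall.mpr fun z => ?_
        rw [hSrec t ω, h, Finset.mem_filter]
        refine ⟨Finset.mem_univ z, ?_⟩
        rw [hstat z]
        have hU2 := (hU (t+1)).2
        have hU1 := (hU (t+1)).1
        nlinarith [hπnonneg z]
  -- final bound
  intro t y
  set c : ℝ := ∑ x ∈ S₀, π x with hcdef
  set ind : Ω → E → ℝ := fun z ω => if z ∈ S t ω then (1:ℝ) else 0 with hinddef
  set X : E → ℝ := fun ω => π y * (ind y ω - ∑ z, π z * ind z ω) with hXdef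
  have hind_eq : ∀ z, ind z = Set.indicator {ω | z ∈ S t ω} (fun _ => (1:ℝ)) := by
    intro z
    funext ω
    simp [hinddef, Set.indicator_apply, Set.mem_setOf_eq]
  have hind_int : ∀ z, Integrable (ind z) P := by
    intro z
    rw [hind_eq z]
    exact (integrable_const (1:ℝ)).indicator (hSmeasSet t z)
  have hind_intg : ∀ z, ∫ ω, ind z ω ∂P = (P {ω | z ∈ S t ω}).toReal := by
    intro z
    rw [hind_eq z, integral_indicator_const (1:ℝ) (hSmeasSet t z)]
    simp [Measure.real]
  have hsum_int : Integrable (fun ω => ∑ z, π z * ind z ω) P :=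
    integrable_finset_sum _ (fun z _ => (hind_int z).const_mul (π z))
  have hX_int : Integrable X P := (((hind_int y).sub hsum_int).const_mul (π y))
  have hint : ∫ ω, X ω ∂P = (∑ x ∈ S₀, π x * Kpow t x y) - π y * c := by
    have h1 : ∫ ω, X ω ∂P
        = π y * ((P {ω | y ∈ S t ω}).toReal - ∑ z, π z * (P {ω | z ∈ S t ω}).toReal) := by
      simp only [hXdef]
      rw [integral_const_mul]
      congr 1
      rw [integral_sub (hind_int y) hsum_int, hind_intg y]
      congr 1
      rw [integral_finset_sum _ (fun z _ => (hind_int z).const_mul (π z))]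
      exact Finset.sum_congr rfl fun z _ => by rw [integral_const_mul, hind_intg z]
    rw [h1, mul_sub, lemA t y, lemB t]
  -- the integrand vanishes a.s. when τ ≤ t
  have hXzero : ∀ᵐ ω ∂P, X ω ≠ 0 → t < τ ω := by
    filter_upwards [habs] with ω hω
    intro hX
    by_contra hcon
    push_neg at hcon
    apply hX
    rcases hω t hcon with h | h
    · have hzero : ∑ z, π z * ind z ω = 0 := by
        refine Finset.sum_eq_zero fun z _ => ?_
        by_cases hz : z ∈ S t ω
        · rw [h z hz, zero_mul]
        · simp [hinddef, hz]
      simp only [hXdef]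
      simp only [hzero, sub_zero]
      by_cases hy : y ∈ S t ω
      · rw [h y hy, zero_mul]
      · simp [hinddef, hy]
    · simp only [hXdef]
      have h1 : ind y ω = 1 := by simp [hinddef, h]
      have h2 : ∑ z, π z * ind z ω = 1 := by
        rw [show ∑ z, π z * ind z ω = ∑ z, π z from
          Finset.sum_congr rfl fun z _ => by simp [hinddef, h]]
        exact hπsum
      rw [h1, h2]
      ring
  have hXmeas : Measurable X := by
    refine (Measurable.sub ?_ ?_).const_mul (π y)
    · rw [hind_eq y]
      exact measurable_const.indicator (hSmeasSet t y)
    · refine Finset.measurable_sum _ fun z _ => ?_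
      rw [hind_eq z]
      exact (measurable_const.indicator (hSmeasSet t z)).const_mul (π z)
  have hNset : MeasurableSet {ω | X ω ≠ 0} :=
    (hXmeas (measurableSet_singleton (0:ℝ))).compl
  have hPle : P {ω | X ω ≠ 0} ≤ P {ω | t < τ ω} := by
    refine measure_mono_ae ?_
    filter_upwards [hXzero] with ω h hx
    exact h hx
  have hXbound : ∀ ω, |X ω| ≤ π y * Set.indicator {ω | X ω ≠ 0} (fun _ => (1:ℝ)) ω := by
    intro ω
    by_cases hx : X ω = 0
    · rw [hx]
      simp [Set.indicator_apply, hx]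
    · rw [Set.indicator_of_mem (show ω ∈ {ω | X ω ≠ 0} from hx), mul_one]
      simp only [hXdef]
      rw [abs_mul, abs_of_nonneg (hπnonneg y)]
      have hiy : 0 ≤ ind y ω ∧ ind y ω ≤ 1 := by
        constructor <;> · simp only [hinddef]; split <;> norm_num
      have hsz : 0 ≤ ∑ z, π z * ind z ω ∧ (∑ z, π z * ind z ω) ≤ 1 := by
        constructor
        · refine Finset.sum_nonneg fun z _ => mul_nonneg (hπnonneg z) ?_
          simp only [hinddef]; split <;> norm_num
        · rw [← hπsum]
          refine Finset.sum_le_sum fun z _ => ?_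
          have : ind z ω ≤ 1 := by simp only [hinddef]; split <;> norm_num
          nlinarith [hπnonneg z, this]
      have habs1 : |ind y ω - ∑ z, π z * ind z ω| ≤ 1 := by
        rw [abs_sub_le_iff]
        constructor <;> linarith [hiy.1, hiy.2, hsz.1, hsz.2]
      nlinarith [hπnonneg y, habs1, abs_nonneg (ind y ω - ∑ z, π z * ind z ω)]
  have hkey : |(∑ x ∈ S₀, π x * Kpow t x y) - π y * c| ≤ π y * (P {ω | t < τ ω}).toReal := by
    rw [← hint]
    calc |∫ ω, X ω ∂P| ≤ ∫ ω, |X ω| ∂P := by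
            simpa [Real.norm_eq_abs] using norm_integral_le_integral_norm (μ := P) (f := X)
      _ ≤ ∫ ω, π y * Set.indicator {ω | X ω ≠ 0} (fun _ => (1:ℝ)) ω ∂P := by
          refine integral_mono hX_int.abs ?_ hXbound
          exact ((integrable_const (1:ℝ)).indicator hNset).const_mul (π y)
      _ = π y * (P {ω | X ω ≠ 0}).toReal := by
          rw [integral_const_mul, integral_indicator_const (1:ℝ) hNset]
          simp [Measure.real]
      _ ≤ π y * (P {ω | t < τ ω}).toReal := by
          refine mul_le_mul_of_nonneg_left ?_ (hπnonneg y)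
          exact ENNReal.toReal_mono (measure_ne_top P _) hPle
  have hdiff : (∑ x ∈ S₀, π x * Kpow t x y) / c - π y
      = ((∑ x ∈ S₀, π x * Kpow t x y) - π y * c) / c := by
    field_simp
  rw [hdiff, abs_div, abs_of_pos hπS0, div_mul_eq_mul_div]
  rw [div_le_div_iff_of_pos_right hπS0]
  exact hkey
end

section
/- Let K̂ be a lift of a kernel K on a finite state space via a map f, with stationary distributions π̂ and π and conductances Φ̂ and Φ respectively. Then Φ̂ ≤ Φ. -/
open Finset

/-- If `K̂` is a lift of `K` (finite state spaces) via `f`, then the conductance of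
the lifted chain is at most the conductance of the original chain: `Φ̂ ≤ Φ`. -/
theorem lift_conductance_le {Ω Ω' : Type*} [Fintype Ω] [DecidableEq Ω]
    [Fintype Ω'] [DecidableEq Ω']
    (K : Ω → Ω → ℝ) (Khat : Ω' → Ω' → ℝ) (π : Ω → ℝ) (πhat : Ω' → ℝ)
    (hKnonneg : ∀ x y, 0 ≤ K x y) (hKrow : ∀ x, ∑ y, K x y = 1)
    (hKhnonneg : ∀ x y, 0 ≤ Khat x y) (hKhrow : ∀ x, ∑ y, Khat x y = 1)
    (hπnonneg : ∀ x, 0 ≤ π x) (hπsum : ∑ x, π x = 1)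
    (hπhnonneg : ∀ x, 0 ≤ πhat x) (hπhsum : ∑ x, πhat x = 1)
    (hstat : ∀ y, ∑ x, π x * K x y = π y)
    (hstat' : ∀ y, ∑ x, πhat x * Khat x y = πhat y)
    (f : Ω' → Ω)
    (hlift : ∀ S A : Finset Ω,
      ∑ x ∈ S, π x * (∑ a ∈ A, K x a)
        = ∑ x ∈ univ.filter (fun x' => f x' ∈ S),
            πhat x * (∑ y ∈ univ.filter (fun y' => f y' ∈ A), Khat x y))
    (hne : ∃ S : Finset Ω, 0 < ∑ x ∈ S, π x ∧ (∑ x ∈ S, π x) ≤ 1/2)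
    (Φ Φhat : ℝ)
    (hΦ : Φ = sInf {r : ℝ | ∃ S : Finset Ω,
      0 < ∑ x ∈ S, π x ∧ (∑ x ∈ S, π x) ≤ 1/2 ∧
      r = (∑ x ∈ S, ∑ y ∈ Sᶜ, π x * K x y) / ∑ x ∈ S, π x})
    (hΦhat : Φhat = sInf {r : ℝ | ∃ S : Finset Ω',
      0 < ∑ x ∈ S, πhat x ∧ (∑ x ∈ S, πhat x) ≤ 1/2 ∧
      r = (∑ x ∈ S, ∑ y ∈ Sᶜ, πhat x * Khat x y) / ∑ x ∈ S, πhat x}) :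
    Φhat ≤ Φ := by

  subst hΦ hΦhat
  set A : Set ℝ := {r : ℝ | ∃ S : Finset Ω,
      0 < ∑ x ∈ S, π x ∧ (∑ x ∈ S, π x) ≤ 1/2 ∧
      r = (∑ x ∈ S, ∑ y ∈ Sᶜ, π x * K x y) / ∑ x ∈ S, π x} with hA
  set B : Set ℝ := {r : ℝ | ∃ S : Finset Ω',
      0 < ∑ x ∈ S, πhat x ∧ (∑ x ∈ S, πhat x) ≤ 1/2 ∧
      r = (∑ x ∈ S, ∑ y ∈ Sᶜ, πhat x * Khat x y) / ∑ x ∈ S, πhat x} with hB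
  have hmass : ∀ S : Finset Ω, ∑ x ∈ S, π x
      = ∑ x ∈ univ.filter (fun x' => f x' ∈ S), πhat x := by
    intro S
    have h := hlift S univ
    simpa [hKrow, hKhrow, filter_true_of_mem] using h
  have hflow : ∀ S : Finset Ω,
      ∑ x ∈ S, ∑ y ∈ Sᶜ, π x * K x y
      = ∑ x ∈ univ.filter (fun x' => f x' ∈ S),
          ∑ y ∈ (univ.filter (fun x' => f x' ∈ S))ᶜ, πhat x * Khat x y := by
    intro S
    have h := hlift S Sᶜ
    have hc : (univ.filter (fun x' : Ω' => f x' ∈ S))ᶜ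
        = univ.filter (fun y' : Ω' => f y' ∈ Sᶜ) := by
      ext z; simp
    rw [hc]
    simpa [Finset.mul_sum] using h
  have hAB : A ⊆ B := by
    rintro r ⟨S, h1, h2, h3⟩
    refine ⟨univ.filter (fun x' => f x' ∈ S), ?_, ?_, ?_⟩
    · rw [← hmass]; exact h1
    · rw [← hmass]; exact h2
    · rw [← hmass, ← hflow]; exact h3
  have hAne : A.Nonempty := by
    obtain ⟨S, h1, h2⟩ := hne
    exact ⟨_, S, h1, h2, rfl⟩
  have hBbdd : BddBelow B := by
    refine ⟨0, ?_⟩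
    rintro r ⟨S, h1, h2, rfl⟩
    apply div_nonneg _ h1.le
    exact Finset.sum_nonneg fun x _ => Finset.sum_nonneg fun y _ =>
      mul_nonneg (hπhnonneg x) (hKhnonneg x y)
  exact csInf_le_csInf hBbdd hAne hAB
end

section
/- Let K be a transition kernel on a state space Ω with stationary distribution π and conductance Φ. Then the total variation mixing time satisfies τ ≥ 1/(4Φ). -/
open MeasureTheory ProbabilityTheory
open scoped ENNReal

/-- The total variation distance `sup_A (μ(A) − ν(A))` between two measures. -/
noncomputable def tvDist' {Ω : Type*} [MeasurableSpace Ω] (μ ν : Measure Ω) : ℝ :=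
  ⨆ A : {A : Set Ω // MeasurableSet A}, ((μ A).toReal - (ν A).toReal)

/-- For a Markov kernel `K` with stationary distribution `π` and conductance `Φ`,
the total variation mixing time satisfies `τ ≥ 1/(4Φ)`. -/
theorem mixing_time_ge_inv_conductance {Ω : Type*} [MeasurableSpace Ω]
    (K : ProbabilityTheory.Kernel Ω Ω) [IsMarkovKernel K]
    (π : Measure Ω) [IsProbabilityMeasure π]
    (hstat : π.bind (fun x => K x) = π)
    (Kpow : ℕ → ProbabilityTheory.Kernel Ω Ω)
    (hKpow0 : ∀ x, Kpow 0 x = Measure.dirac x)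
    (hKpowS : ∀ t x, Kpow (t+1) x = (Kpow t x).bind (fun z => K z))
    (Φ : ℝ)
    (hΦ : Φ = sInf {r : ℝ | ∃ A : Set Ω, MeasurableSet A ∧
      0 < π A ∧ π A ≤ 1/2 ∧
      r = (∫ x in A, ((K x) Aᶜ).toReal ∂π) / (π A).toReal})
    (hΦne : ∃ A : Set Ω, MeasurableSet A ∧ 0 < π A ∧ π A ≤ 1/2)
    (τ : ℕ)
    (hmix : ∃ t : ℕ, ∀ x, tvDist' (Kpow t x) π < 1/4)
    (hτ : τ = sInf {t : ℕ | ∀ x, tvDist' (Kpow t x) π < 1/4}) :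
    1 / (4 * Φ) ≤ (τ : ℝ) := by
  classical
  have hKm : Measurable fun x => K x := K.measurable
  -- each Kpow t x is a probability measure
  have hprob : ∀ t x, IsProbabilityMeasure (Kpow t x) := by
    intro t
    induction t with
    | zero =>
      intro x; rw [hKpow0]; infer_instance
    | succ t ih =>
      intro x
      rw [hKpowS]
      haveI := ih x
      constructor
      rw [Measure.bind_apply MeasurableSet.univ hKm.aemeasurable]
      simp
  -- iterated stationarity
  have hstatT : ∀ t, π.bind (fun x => Kpow t x) = π := by
    intro t
    induction t with
    | zero =>
      simp only [hKpow0]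
      exact Measure.bind_dirac
    | succ t ih =>
      simp only [hKpowS]
      rw [← Measure.bind_bind (Kpow t).measurable.aemeasurable hKm.aemeasurable, ih, hstat]
  -- τ is in the mixing set
  have hτmem : ∀ x, tvDist' (Kpow τ x) π < 1/4 := by
    rw [hτ]; exact Nat.sInf_mem hmix
  -- lower bound on tvDist'
  have htv : ∀ (μ : Measure Ω), IsProbabilityMeasure μ → ∀ (A : Set Ω), MeasurableSet A →
      (μ A).toReal - (π A).toReal ≤ tvDist' μ π := by
    intro μ hμ A hA
    have hb : BddAbove (Set.range fun B : {A : Set Ω // MeasurableSet A} =>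
        ((μ (B : Set Ω)).toReal - (π (B : Set Ω)).toReal)) := by
      refine ⟨1, ?_⟩
      rintro r ⟨B, rfl⟩
      have h1 : (μ (B : Set Ω)).toReal ≤ 1 := by
        have := ENNReal.toReal_mono ENNReal.one_ne_top (prob_le_one (μ := μ) (s := B))
        simpa using this
      have h2 : 0 ≤ (π (B : Set Ω)).toReal := ENNReal.toReal_nonneg
      simp only
      linarith
    exact le_ciSup hb ⟨A, hA⟩
  obtain ⟨A0, hA0, hA0pos, hA0half⟩ := hΦne
  have hhalf_toReal : ∀ (A : Set Ω), π A ≤ 1/2 → (π A).toReal ≤ 1/2 := by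
    intro A h
    have := ENNReal.toReal_mono (by norm_num : (1/2 : ℝ≥0∞) ≠ ⊤) h
    simpa using this
  -- τ ≥ 1
  have hτpos : 0 < τ := by
    rcases Nat.eq_zero_or_pos τ with h0 | h
    · exfalso
      obtain ⟨x, hx⟩ : A0.Nonempty := nonempty_of_measure_ne_zero hA0pos.ne'
      have htvx := hτmem x
      rw [h0, hKpow0] at htvx
      have hd : (Measure.dirac x) A0 = 1 := by
        rw [Measure.dirac_apply' x hA0]
        simp [hx]
      have hle := htv (Measure.dirac x) (by infer_instance) A0 hA0
      rw [hd] at hle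
      have := hhalf_toReal A0 hA0half
      simp only [ENNReal.toReal_one] at hle
      linarith
    · exact h
  have hτR : (0 : ℝ) < (τ : ℝ) := by exact_mod_cast hτpos
  -- Φ ≥ 0
  set S := {r : ℝ | ∃ A : Set Ω, MeasurableSet A ∧ 0 < π A ∧ π A ≤ 1/2 ∧
      r = (∫ x in A, ((K x) Aᶜ).toReal ∂π) / (π A).toReal} with hS
  have hSne : S.Nonempty := ⟨_, A0, hA0, hA0pos, hA0half, rfl⟩
  have hS0 : ∀ r ∈ S, 0 ≤ r := by
    rintro r ⟨A, hA, hpos, hhalf, rfl⟩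
    exact div_nonneg (integral_nonneg fun x => ENNReal.toReal_nonneg) ENNReal.toReal_nonneg
  have hΦ0 : 0 ≤ Φ := by rw [hΦ]; exact le_csInf hSne hS0
  -- main claim
  have hmain : ∀ ε : ℝ, 0 < ε → 1/4 < (τ : ℝ) * (Φ + ε) := by
    intro ε hε
    obtain ⟨r, hrS, hrlt⟩ : ∃ r ∈ S, r < Φ + ε := by
      have := Real.lt_sInf_add_pos hSne hε
      rw [← hΦ] at this
      exact this
    obtain ⟨A, hA, hpos, hhalf, hr⟩ := hrS
    have hπAfin : π A ≠ ⊤ := measure_ne_top π A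
    have hπAR : 0 < (π A).toReal := ENNReal.toReal_pos hpos.ne' hπAfin
    set Q1 : ℝ≥0∞ := ∫⁻ x in A, K x Aᶜ ∂π with hQ1def
    have hgmeas : Measurable fun z => K z Aᶜ := K.measurable_coe hA.compl
    -- key induction : flow after t steps ≤ t * Q1
    have hQle : ∀ t : ℕ, (∫⁻ x in A, Kpow t x Aᶜ ∂π) ≤ (t : ℝ≥0∞) * Q1 := by
      intro t
      induction t with
      | zero =>
        have hz : ∫⁻ x in A, Kpow 0 x Aᶜ ∂π = ∫⁻ x in A, (0 : ℝ≥0∞) ∂π := by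
          refine setLIntegral_congr_fun hA (fun x hx => ?_)
          rw [hKpow0, Measure.dirac_apply' x hA.compl]
          simp [hx]
        simp [hz]
      | succ t ih =>
        set g : Ω → ℝ≥0∞ := A.indicator fun z => K z Aᶜ with hgdef
        have hgm : Measurable g := hgmeas.indicator hA
        have hf : ∀ x, Kpow (t+1) x Aᶜ ≤ (∫⁻ z, g z ∂(Kpow t x)) + Kpow t x Aᶜ := by
          intro x
          rw [hKpowS, Measure.bind_apply hA.compl hKm.aemeasurable,
            ← lintegral_add_compl (fun z => K z Aᶜ) hA (μ := Kpow t x)]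
          refine add_le_add ?_ ?_
          · rw [hgdef, lintegral_indicator hA]
          · calc ∫⁻ z in Aᶜ, K z Aᶜ ∂(Kpow t x)
                ≤ ∫⁻ _ in Aᶜ, 1 ∂(Kpow t x) := by
                  refine setLIntegral_mono' hA.compl fun z _ => ?_
                  exact prob_le_one
              _ = Kpow t x Aᶜ := by simp
        have hmeas1 : Measurable fun x => ∫⁻ z, g z ∂(Kpow t x) :=
          Measure.measurable_lintegral hgm |>.comp (Kpow t).measurable
        calc ∫⁻ x in A, Kpow (t+1) x Aᶜ ∂π
            ≤ ∫⁻ x in A, ((∫⁻ z, g z ∂(Kpow t x)) + Kpow t x Aᶜ) ∂π :=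
              lintegral_mono fun x => hf x
          _ = (∫⁻ x in A, (∫⁻ z, g z ∂(Kpow t x)) ∂π) + ∫⁻ x in A, Kpow t x Aᶜ ∂π :=
              lintegral_add_left (hmeas1) _
          _ ≤ (∫⁻ x, (∫⁻ z, g z ∂(Kpow t x)) ∂π) + (t : ℝ≥0∞) * Q1 := by
              gcongr
              exact Measure.restrict_le_self
          _ = (∫⁻ z, g z ∂(π.bind (fun x => Kpow t x))) + (t : ℝ≥0∞) * Q1 := by
              rw [Measure.lintegral_bind (Kpow t).measurable.aemeasurable hgm.aemeasurable]
          _ = Q1 + (t : ℝ≥0∞) * Q1 := by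
              rw [hstatT t, hgdef, lintegral_indicator hA]
          _ = ((t + 1 : ℕ) : ℝ≥0∞) * Q1 := by
              push_cast
              ring
    -- value of Q1
    have hQ1fin : Q1 ≠ ⊤ := by
      have : Q1 ≤ ∫⁻ _ in A, 1 ∂π := setLIntegral_mono' hA fun x _ => prob_le_one
      simp only [lintegral_one, Measure.restrict_apply MeasurableSet.univ,
        Set.univ_inter] at this
      exact (lt_of_le_of_lt this (measure_lt_top π A)).ne
    have hQ1toReal : Q1.toReal = ∫ x in A, ((K x) Aᶜ).toReal ∂π := by
      rw [hQ1def]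
      exact (integral_toReal (hgmeas.aemeasurable.restrict)
        (Filter.Eventually.of_forall fun x => measure_lt_top _ _)).symm
    have hrQ1 : Q1.toReal = r * (π A).toReal := by
      rw [hQ1toReal, hr]
      field_simp
    have hr0 : 0 ≤ r := hS0 r ⟨A, hA, hpos, hhalf, hr⟩
    have hΦε : 0 < Φ + ε := by linarith
    -- strict bound on Q τ
    have hQτ : (∫⁻ x in A, Kpow τ x Aᶜ ∂π) < ENNReal.ofReal ((τ : ℝ) * (Φ + ε)) * π A := by
      calc (∫⁻ x in A, Kpow τ x Aᶜ ∂π) ≤ (τ : ℝ≥0∞) * Q1 := hQle τ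
        _ = ENNReal.ofReal ((τ : ℝ) * (r * (π A).toReal)) := by
            rw [← hrQ1, ENNReal.ofReal_mul (by positivity), ENNReal.ofReal_toReal hQ1fin]
            simp
        _ < ENNReal.ofReal (((τ : ℝ) * (Φ + ε)) * (π A).toReal) := by
            rw [ENNReal.ofReal_lt_ofReal_iff (by positivity)]
            calc (τ : ℝ) * (r * (π A).toReal) < (τ : ℝ) * ((Φ + ε) * (π A).toReal) := by
                  apply mul_lt_mul_of_pos_left _ hτR
                  exact mul_lt_mul_of_pos_right hrlt hπAR
              _ = ((τ : ℝ) * (Φ + ε)) * (π A).toReal := by ring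
        _ = ENNReal.ofReal ((τ : ℝ) * (Φ + ε)) * π A := by
            rw [ENNReal.ofReal_mul (by positivity), ENNReal.ofReal_toReal hπAfin]
    -- find a point with small escape probability
    obtain ⟨x, hxA, hxlt⟩ : ∃ x ∈ A, Kpow τ x Aᶜ < ENNReal.ofReal ((τ : ℝ) * (Φ + ε)) := by
      by_contra hcon
      push_neg at hcon
      have : ENNReal.ofReal ((τ : ℝ) * (Φ + ε)) * π A ≤ ∫⁻ x in A, Kpow τ x Aᶜ ∂π := by
        have := setLIntegral_mono' (μ := π) hA (f := fun _ => ENNReal.ofReal ((τ : ℝ) * (Φ + ε)))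
          (g := fun x => Kpow τ x Aᶜ) fun x hx => hcon x hx
        simpa [Measure.restrict_apply MeasurableSet.univ, mul_comm] using this
      exact absurd hQτ (not_lt.mpr this)
    have hxR : (Kpow τ x Aᶜ).toReal < (τ : ℝ) * (Φ + ε) :=
      ENNReal.toReal_lt_of_lt_ofReal hxlt
    -- complement relation
    haveI := hprob τ x
    have hadd : (Kpow τ x A).toReal + (Kpow τ x Aᶜ).toReal = 1 := by
      have h1 := measure_add_measure_compl (μ := Kpow τ x) hA
      rw [measure_univ] at h1
      have := congrArg ENNReal.toReal h1
      rwa [ENNReal.toReal_add (measure_ne_top _ _) (measure_ne_top _ _),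
        ENNReal.toReal_one] at this
    have hle := htv (Kpow τ x) (hprob τ x) A hA
    have hup := hτmem x
    have hπh := hhalf_toReal A hhalf
    linarith
  -- conclude : 1/4 ≤ τ Φ
  have hfinal : 1/4 ≤ (τ : ℝ) * Φ := by
    by_contra h'
    push_neg at h'
    have hε : 0 < (1/4 - (τ : ℝ) * Φ) / (τ : ℝ) := div_pos (by linarith) hτR
    have := hmain _ hε
    have heq : (τ : ℝ) * (Φ + (1/4 - (τ : ℝ) * Φ) / (τ : ℝ)) = 1/4 := by
      field_simp
      ring
    rw [heq] at this
    exact lt_irrefl _ this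
  have hΦpos : 0 < Φ := by nlinarith
  rw [div_le_iff₀ (by positivity)]
  nlinarith
end

section
/- Let π be a probability measure on ℝ^d with density ρ with respect to Lebesgue measure. Fix a family H of Borel sets each of which is a union of at most m axis-parallel rectangles with all side lengths at least ε (or complements of such). Then lim_{δ→0} sup_{S ∈ H} |π(S_δ) − π(S)| = 0, where S_δ = { x : inf_{y∈S} |x−y|_∞ ≤ δ } is the δ-thickening of S. -/
open MeasureTheory Set Filter
open scoped ENNReal

/-- `R` is an axis-parallel closed rectangle in `ℝ^d` all of whose side lengths are
at least `ε`. -/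
def IsBigRect (d : ℕ) (ε : ℝ) (R : Set (Fin d → ℝ)) : Prop :=
  ∃ a b : Fin d → ℝ, (∀ i, ε ≤ b i - a i) ∧ R = Set.Icc a b

/-- `S` belongs to the class `𝓗_{ε,m}`: it is a union of at most `m` sets, each of
which is a big rectangle or the complement of one, or the complement of such a union. -/
def InHClass (d : ℕ) (ε : ℝ) (m : ℕ) (S : Set (Fin d → ℝ)) : Prop :=
  ∃ (k : ℕ), 1 ≤ k ∧ k ≤ m ∧ ∃ R : Fin k → Set (Fin d → ℝ),
    (∀ j, IsBigRect d ε (R j) ∨ IsBigRect d ε (R j)ᶜ) ∧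
    (S = ⋃ j, R j ∨ S = (⋃ j, R j)ᶜ)

namespace ThickAux

variable {d : ℕ}

/-- Extract a nearby point from membership in a cthickening. -/
lemma exists_near {s : Set (Fin d → ℝ)} (hs : s.Nonempty) {x : Fin d → ℝ} {δ r : ℝ}
    (hx : x ∈ Metric.cthickening δ s) (hδ : 0 ≤ δ) (hr : δ < r) :
    ∃ y ∈ s, dist x y < r := by
  rw [Metric.mem_cthickening_iff] at hx
  have h1 : Metric.infDist x s ≤ δ := by
    have := ENNReal.toReal_mono (by simp) hx
    rwa [ENNReal.toReal_ofReal hδ] at this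
  exact (Metric.infDist_lt_iff hs).1 (lt_of_le_of_lt h1 hr)

/-- The δ-bad set of a rectangle is covered by boundary slabs. -/
lemma rect_bad {a b : Fin d → ℝ} (hab : a ≤ b) {δ : ℝ} (hδ : 0 < δ) :
    Metric.cthickening δ (Set.Icc a b) \ Set.Icc a b ⊆
      ⋃ i, ((fun x => x i) ⁻¹' Set.Icc (a i - δ) (a i + δ) ∪
            (fun x => x i) ⁻¹' Set.Icc (b i - δ) (b i + δ)) := by
  rintro x ⟨hx1, hx2⟩
  have hne : (Set.Icc a b).Nonempty := Set.nonempty_Icc.2 hab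
  simp only [Set.mem_Icc, Pi.le_def, not_and_or, not_forall, not_le] at hx2
  rcases hx2 with ⟨i, hi⟩ | ⟨i, hi⟩
  · have hlow : a i - δ ≤ x i := by
      by_contra h
      push_neg at h
      obtain ⟨y, hy, hdist⟩ := exists_near hne hx1 hδ.le (by linarith : δ < a i - x i)
      have h1 : dist (x i) (y i) ≤ dist x y := dist_le_pi_dist x y i
      have h2 : a i ≤ y i := hy.1 i
      rw [Real.dist_eq, abs_sub_comm] at h1
      have := le_abs_self (y i - x i)
      linarith
    exact Set.mem_iUnion.2 ⟨i, Or.inl ⟨hlow, by linarith⟩⟩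
  · have hhigh : x i ≤ b i + δ := by
      by_contra h
      push_neg at h
      obtain ⟨y, hy, hdist⟩ := exists_near hne hx1 hδ.le (by linarith : δ < x i - b i)
      have h1 : dist (x i) (y i) ≤ dist x y := dist_le_pi_dist x y i
      have h2 : y i ≤ b i := hy.2 i
      rw [Real.dist_eq] at h1
      have := le_abs_self (x i - y i)
      linarith
    exact Set.mem_iUnion.2 ⟨i, Or.inr ⟨by linarith, hhigh⟩⟩

/-- The δ-bad set of a rectangle complement is covered by boundary slabs. -/
lemma compl_bad {a b : Fin d → ℝ} {δ : ℝ} (hδ : 0 < δ) :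
    Metric.cthickening δ (Set.Icc a b)ᶜ \ (Set.Icc a b)ᶜ ⊆
      ⋃ i, ((fun x => x i) ⁻¹' Set.Icc (a i - δ) (a i + δ) ∪
            (fun x => x i) ⁻¹' Set.Icc (b i - δ) (b i + δ)) := by
  rintro x ⟨hx1, hx2⟩
  rw [Set.notMem_compl_iff] at hx2
  rcases Set.eq_empty_or_nonempty ((Set.Icc a b)ᶜ) with hcE | hcNe
  · rw [hcE, Metric.cthickening_empty] at hx1; exact absurd hx1 (Set.notMem_empty x)
  by_contra hcon
  simp only [Set.mem_iUnion, Set.mem_union, Set.mem_preimage, Set.mem_Icc, not_exists, not_or,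
    not_and_or, not_le] at hcon
  have hkey : ∀ i, δ < x i - a i ∧ δ < b i - x i := by
    intro i
    obtain ⟨h1, h2⟩ := hcon i
    have hxa : a i ≤ x i := hx2.1 i
    have hxb : x i ≤ b i := hx2.2 i
    constructor
    · rcases h1 with h | h <;> linarith
    · rcases h2 with h | h <;> linarith
  haveI : Nonempty (Fin d) := by
    obtain ⟨y, hy⟩ := hcNe
    rw [Set.mem_compl_iff, Set.mem_Icc, not_and_or] at hy
    rcases hy with hy | hy <;>
    · rw [Pi.le_def, not_forall] at hy
      obtain ⟨i, _⟩ := hy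
      exact ⟨i⟩
  set r : ℝ := Finset.univ.inf' Finset.univ_nonempty (fun i => min (x i - a i) (b i - x i))
    with hr
  have hδr : δ < r := by
    rw [hr, Finset.lt_inf'_iff]
    intro i _
    exact lt_min (hkey i).1 (hkey i).2
  obtain ⟨y, hy, hdist⟩ := exists_near hcNe hx1 hδ.le hδr
  rw [Set.mem_compl_iff, Set.mem_Icc, not_and_or] at hy
  have hri : ∀ i, r ≤ min (x i - a i) (b i - x i) := fun i =>
    Finset.inf'_le _ (Finset.mem_univ i)
  rcases hy with hy | hy <;> rw [Pi.le_def, not_forall] at hy <;> obtain ⟨i, hi⟩ := hy <;>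
    push_neg at hi <;>
    have h1 : dist (x i) (y i) ≤ dist x y := dist_le_pi_dist x y i
  · rw [Real.dist_eq] at h1
    have h2 := le_abs_self (x i - y i)
    have h3 := (hri i).trans (min_le_left _ _)
    linarith
  · rw [Real.dist_eq, abs_sub_comm] at h1
    have h2 := le_abs_self (y i - x i)
    have h3 := (hri i).trans (min_le_right _ _)
    linarith

/-- The sup over positions of the measure of a coordinate slab of half-width `δ`. -/
noncomputable def omegaF (π : Measure (Fin d → ℝ)) (i : Fin d) (δ : ℝ) : ℝ≥0∞ :=
  ⨆ t : ℝ, π ((fun x => x i) ⁻¹' Set.Icc (t - δ) (t + δ))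

/-- The sum over coordinates of `omegaF`. -/
noncomputable def OmegaF (π : Measure (Fin d → ℝ)) (δ : ℝ) : ℝ≥0∞ :=
  ∑ i : Fin d, omegaF π i δ

end ThickAux

open ThickAux

/-- For a probability measure `π` on `ℝ^d` with density `ρ` with respect to Lebesgue
measure and any family `H` of sets from `𝓗_{ε,m}`, the measures of the closed
`δ`-thickenings `S_δ` (in the sup metric) converge to the measures of the sets `S`
uniformly over `S ∈ H` as `δ → 0⁺`. -/
theorem tendsto_sup_thickening_measure {d : ℕ} (ε : ℝ) (hε : 0 < ε) (m : ℕ)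
    (ρ : (Fin d → ℝ) → ℝ) (hρ : Measurable ρ) (hρnonneg : ∀ x, 0 ≤ ρ x)
    (π : Measure (Fin d → ℝ))
    (hπ : π = volume.withDensity (fun x => ENNReal.ofReal (ρ x)))
    [IsProbabilityMeasure π]
    (H : Set (Set (Fin d → ℝ))) (hH : ∀ S ∈ H, InHClass d ε m S) :
    Tendsto
      (fun δ : ℝ => ⨆ S ∈ H,
        |(π (Metric.cthickening δ S)).toReal - (π S).toReal|)
      (nhdsWithin 0 (Set.Ioi 0)) (nhds 0) := by
  -- absolute continuity of π and of its marginals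
  have hπac : π ≪ (volume : Measure (Fin d → ℝ)) := by
    rw [hπ]; exact withDensity_absolutelyContinuous _ _
  have hmargac : ∀ i : Fin d, (π.map (fun x => x i)) ≪ (volume : Measure ℝ) := by
    intro i
    refine Measure.AbsolutelyContinuous.mk fun A hA h0 => ?_
    rw [Measure.map_apply (measurable_pi_apply i) hA]
    have hpre : ((fun x : Fin d → ℝ => x i) ⁻¹' A) = Function.eval i ⁻¹' A := rfl
    have h1 : (volume : Measure (Fin d → ℝ)) ((fun x : Fin d → ℝ => x i) ⁻¹' A) = 0 := by
      rw [hpre,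
        show (volume : Measure (Fin d → ℝ)) = Measure.pi fun _ => volume from volume_pi]
      exact Measure.pi_eval_preimage_null (μ := fun _ => (volume : Measure ℝ)) h0
    exact hπac h1
  -- relating slab measures to the marginals
  have hslab_eq : ∀ (i : Fin d) (t δ : ℝ),
      π ((fun x : Fin d → ℝ => x i) ⁻¹' Set.Icc (t - δ) (t + δ)) =
        (π.map (fun x => x i)) (Set.Icc (t - δ) (t + δ)) := fun i t δ =>
    (Measure.map_apply (measurable_pi_apply i) measurableSet_Icc).symm
  have hω_le_one : ∀ (i : Fin d) (δ : ℝ), omegaF π i δ ≤ 1 := fun i δ =>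
    iSup_le fun t => by
      calc π ((fun x : Fin d → ℝ => x i) ⁻¹' Set.Icc (t - δ) (t + δ)) ≤ π Set.univ :=
            measure_mono (Set.subset_univ _)
      _ = 1 := measure_univ
  have hΩne : ∀ δ : ℝ, OmegaF π δ ≠ ∞ := by
    intro δ
    have h1 : OmegaF π δ ≤ ∑ _i : Fin d, (1 : ℝ≥0∞) :=
      Finset.sum_le_sum fun i _ => hω_le_one i δ
    refine (h1.trans_lt ?_).ne
    simp [ENNReal.natCast_lt_top]
  -- uniform smallness of slab measures
  have hωsmall : ∀ (i : Fin d) (η : ℝ≥0∞), η ≠ 0 →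
      ∃ δ0 > (0 : ℝ), ∀ δ : ℝ, 0 < δ → δ < δ0 → omegaF π i δ ≤ η := by
    intro i η hη
    set μ := π.map (fun x : Fin d → ℝ => x i) with hμdef
    haveI : IsProbabilityMeasure μ :=
      Measure.isProbabilityMeasure_map (measurable_pi_apply i).aemeasurable
    have hac := hmargac i
    have hfin : ∫⁻ t, μ.rnDeriv volume t ∂volume ≠ ∞ :=
      (Measure.lintegral_rnDeriv_lt_top μ volume).ne
    obtain ⟨δ', hδ'pos, hδ'⟩ := exists_pos_setLIntegral_lt_of_measure_lt hfin hη
    have hm1 : min δ' 1 ≠ 0 := (lt_min hδ'pos (by norm_num)).ne'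
    have hm2 : min δ' 1 ≠ ∞ := ne_top_of_le_ne_top ENNReal.one_ne_top (min_le_right _ _)
    have hmpos : 0 < (min δ' 1).toReal := ENNReal.toReal_pos hm1 hm2
    refine ⟨(min δ' 1).toReal / 2, by linarith, ?_⟩
    intro δ hδpos hδlt
    refine iSup_le fun t => ?_
    have hvol : (volume : Measure ℝ) (Set.Icc (t - δ) (t + δ)) < δ' := by
      rw [Real.volume_Icc]
      have h2δ : (t + δ) - (t - δ) = 2 * δ := by ring
      rw [h2δ]
      calc ENNReal.ofReal (2 * δ) < ENNReal.ofReal ((min δ' 1).toReal) := by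
            rw [ENNReal.ofReal_lt_ofReal_iff hmpos]; linarith
        _ = min δ' 1 := ENNReal.ofReal_toReal hm2
        _ ≤ δ' := min_le_left _ _
    have hμIcc : μ (Set.Icc (t - δ) (t + δ)) =
        ∫⁻ x in Set.Icc (t - δ) (t + δ), μ.rnDeriv volume x ∂volume := by
      conv_lhs => rw [← Measure.withDensity_rnDeriv_eq μ volume hac]
      rw [withDensity_apply _ measurableSet_Icc]
    rw [hslab_eq i t δ, ← hμdef, hμIcc]
    exact (hδ' _ hvol).le
  -- the slab sup tends to 0
  have hωtendsto : ∀ i : Fin d,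
      Tendsto (fun δ => omegaF π i δ) (nhdsWithin 0 (Set.Ioi 0)) (nhds 0) := by
    intro i
    rw [ENNReal.tendsto_nhds_zero]
    intro η hη
    obtain ⟨δ0, hδ0, hb⟩ := hωsmall i η hη.ne'
    filter_upwards [Ioo_mem_nhdsGT_of_mem (Set.mem_Ico.2 ⟨le_refl (0:ℝ), hδ0⟩)] with δ hδ
    exact hb δ hδ.1 hδ.2
  have hΩtendsto : Tendsto (fun δ => OmegaF π δ) (nhdsWithin 0 (Set.Ioi 0)) (nhds 0) := by
    have h := tendsto_finset_sum (Finset.univ : Finset (Fin d))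
      (fun i _ => hωtendsto i)
    simpa [OmegaF] using h
  -- the key per-set estimate
  have key : ∀ S ∈ H, ∀ δ : ℝ, 0 < δ →
      |(π (Metric.cthickening δ S)).toReal - (π S).toReal| ≤
        ((2 * m : ℝ≥0∞) * OmegaF π δ).toReal := by
    intro S hS δ hδ
    obtain ⟨k, hk1, hkm, R, hR, hSU⟩ := hH S hS
    haveI : Nonempty (Fin k) := ⟨⟨0, hk1⟩⟩
    have hcov : ∀ j : Fin k, ∃ a b : Fin d → ℝ,
        ((Metric.cthickening δ (R j) \ R j) ∪
          (Metric.cthickening δ (R j)ᶜ \ (R j)ᶜ)) ⊆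
        ⋃ i, ((fun x => x i) ⁻¹' Set.Icc (a i - δ) (a i + δ) ∪
              (fun x => x i) ⁻¹' Set.Icc (b i - δ) (b i + δ)) := by
      intro j
      rcases hR j with ⟨a, b, hab', hEq⟩ | ⟨a, b, hab', hEq⟩
      · have hab : a ≤ b := fun i => by have := hab' i; linarith
        exact ⟨a, b, by
          rw [hEq]; exact Set.union_subset (rect_bad hab hδ) (compl_bad hδ)⟩
      · have hRj : R j = (Set.Icc a b)ᶜ := by rw [← compl_compl (R j), hEq]
        exact ⟨a, b, by
          rw [hRj, compl_compl]; exact Set.union_subset (compl_bad hδ) (rect_bad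
            (fun i => by have := hab' i; linarith) hδ)⟩
    choose A B hcover using hcov
    have hbad : Metric.cthickening δ S \ S ⊆
        ⋃ j, ⋃ i, ((fun x => x i) ⁻¹' Set.Icc (A j i - δ) (A j i + δ) ∪
              (fun x => x i) ⁻¹' Set.Icc (B j i - δ) (B j i + δ)) := by
      intro x hx
      have hx' : ∃ j, x ∈ (Metric.cthickening δ (R j) \ R j) ∪
          (Metric.cthickening δ (R j)ᶜ \ (R j)ᶜ) := by
        obtain ⟨hx1, hx2⟩ := hx
        rcases hSU with hSU | hSU
        · rw [hSU] at hx1 hx2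
          rw [Metric.mem_cthickening_iff, EMetric.infEdist_iUnion] at hx1
          obtain ⟨j0, hj0⟩ := Finite.exists_min fun j => EMetric.infEdist x (R j)
          have hj0' : EMetric.infEdist x (R j0) ≤ ENNReal.ofReal δ :=
            (le_iInf hj0).trans hx1
          exact ⟨j0, Or.inl ⟨Metric.mem_cthickening_iff.2 hj0',
            fun hmem => hx2 (Set.mem_iUnion.2 ⟨j0, hmem⟩)⟩⟩
        · rw [hSU] at hx1 hx2
          rw [Set.notMem_compl_iff] at hx2
          obtain ⟨j0, hj0⟩ := Set.mem_iUnion.1 hx2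
          refine ⟨j0, Or.inr ⟨?_, fun hmem => hmem hj0⟩⟩
          exact Metric.cthickening_subset_of_subset δ
            (Set.compl_subset_compl.2 (Set.subset_iUnion R j0)) hx1
      obtain ⟨j, hj⟩ := hx'
      exact Set.mem_iUnion.2 ⟨j, hcover j hj⟩
    have hslab_le : ∀ (i : Fin d) (t : ℝ),
        π ((fun x : Fin d → ℝ => x i) ⁻¹' Set.Icc (t - δ) (t + δ)) ≤ omegaF π i δ :=
      fun i t => le_iSup (fun t => π ((fun x : Fin d → ℝ => x i) ⁻¹'
        Set.Icc (t - δ) (t + δ))) t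
    have hinner : ∀ j : Fin k,
        π (⋃ i, ((fun x => x i) ⁻¹' Set.Icc (A j i - δ) (A j i + δ) ∪
              (fun x => x i) ⁻¹' Set.Icc (B j i - δ) (B j i + δ))) ≤ 2 * OmegaF π δ := by
      intro j
      calc π (⋃ i, _) ≤ ∑' i : Fin d, π ((fun x => x i) ⁻¹' Set.Icc (A j i - δ) (A j i + δ) ∪
              (fun x => x i) ⁻¹' Set.Icc (B j i - δ) (B j i + δ)) := measure_iUnion_le _
        _ = ∑ i : Fin d, π ((fun x => x i) ⁻¹' Set.Icc (A j i - δ) (A j i + δ) ∪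
              (fun x => x i) ⁻¹' Set.Icc (B j i - δ) (B j i + δ)) := tsum_fintype _
        _ ≤ ∑ i : Fin d, (omegaF π i δ + omegaF π i δ) := Finset.sum_le_sum fun i _ =>
              (measure_union_le _ _).trans (add_le_add (hslab_le i _) (hslab_le i _))
        _ = 2 * OmegaF π δ := by
              rw [Finset.sum_add_distrib, ← two_mul]; rfl
    have hmeas : π (Metric.cthickening δ S \ S) ≤ (2 * m : ℝ≥0∞) * OmegaF π δ := by
      calc π (Metric.cthickening δ S \ S)
          ≤ π (⋃ j, ⋃ i, ((fun x => x i) ⁻¹' Set.Icc (A j i - δ) (A j i + δ) ∪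
              (fun x => x i) ⁻¹' Set.Icc (B j i - δ) (B j i + δ))) := measure_mono hbad
        _ ≤ ∑' j : Fin k, π (⋃ i, ((fun x => x i) ⁻¹' Set.Icc (A j i - δ) (A j i + δ) ∪
              (fun x => x i) ⁻¹' Set.Icc (B j i - δ) (B j i + δ))) := measure_iUnion_le _
        _ = ∑ j : Fin k, π (⋃ i, ((fun x => x i) ⁻¹' Set.Icc (A j i - δ) (A j i + δ) ∪
              (fun x => x i) ⁻¹' Set.Icc (B j i - δ) (B j i + δ))) := tsum_fintype _
        _ ≤ ∑ _j : Fin k, 2 * OmegaF π δ := Finset.sum_le_sum fun j _ => hinner j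
        _ = (k : ℝ≥0∞) * (2 * OmegaF π δ) := by
              rw [Finset.sum_const, Finset.card_univ, Fintype.card_fin, nsmul_eq_mul]
        _ ≤ (m : ℝ≥0∞) * (2 * OmegaF π δ) :=
              mul_le_mul_left (by exact_mod_cast hkm) _
        _ = (2 * m : ℝ≥0∞) * OmegaF π δ := by ring
    -- conclude the per-set bound
    have hfin1 : π (Metric.cthickening δ S) ≠ ∞ := measure_ne_top π _
    have hfinC : (2 * m : ℝ≥0∞) * OmegaF π δ ≠ ∞ :=
      ENNReal.mul_ne_top (ENNReal.mul_ne_top ENNReal.ofNat_ne_top (ENNReal.natCast_ne_top m)) (hΩne δ)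
    have hBA : π S ≤ π (Metric.cthickening δ S) :=
      measure_mono (Metric.self_subset_cthickening S)
    rw [abs_of_nonneg (sub_nonneg.2 (ENNReal.toReal_mono hfin1 hBA))]
    have hAle : π (Metric.cthickening δ S) ≤ π S + (2 * m : ℝ≥0∞) * OmegaF π δ := by
      calc π (Metric.cthickening δ S)
          ≤ π (S ∪ (Metric.cthickening δ S \ S)) := measure_mono (by
            intro x hx
            by_cases h : x ∈ S
            · exact Or.inl h
            · exact Or.inr ⟨hx, h⟩)
        _ ≤ π S + π (Metric.cthickening δ S \ S) := measure_union_le _ _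
        _ ≤ π S + (2 * m : ℝ≥0∞) * OmegaF π δ := add_le_add_right hmeas _
    have htR := ENNReal.toReal_mono
      (ENNReal.add_ne_top.2 ⟨measure_ne_top π S, hfinC⟩) hAle
    rw [ENNReal.toReal_add (measure_ne_top π S) hfinC] at htR
    linarith
  -- final squeeze
  have hg : Tendsto (fun δ : ℝ => ((2 * m : ℝ≥0∞) * OmegaF π δ).toReal)
      (nhdsWithin 0 (Set.Ioi 0)) (nhds 0) := by
    have h1 : Tendsto (fun δ => (2 * m : ℝ≥0∞) * OmegaF π δ)
        (nhdsWithin 0 (Set.Ioi 0)) (nhds 0) := by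
      have h := ENNReal.Tendsto.const_mul hΩtendsto
        (Or.inr (ENNReal.mul_ne_top (ENNReal.ofNat_ne_top (n := 2)) (ENNReal.natCast_ne_top m)))
      simpa using h
    have h2 := (ENNReal.tendsto_toReal (by simp : (0 : ℝ≥0∞) ≠ ∞)).comp h1
    simpa only [Function.comp_def, ENNReal.toReal_zero] using h2
  refine squeeze_zero' ?_ ?_ hg
  · filter_upwards with δ
    exact Real.iSup_nonneg fun S => Real.iSup_nonneg fun _ => abs_nonneg _
  · filter_upwards [self_mem_nhdsWithin] with δ hδ
    exact Real.iSup_le (fun S => Real.iSup_le (fun hS => key S hS δ hδ)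
      ENNReal.toReal_nonneg) ENNReal.toReal_nonneg
end
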